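/- arXiv:1705.01580 — 11 statements merged into one kernel-verified Lean document; each statement's English description precedes it below -/
import Mathlib

section
/- Let X be a Hausdorff topological space equipped with a partial order ≼ such that for every u ∈ X the order intervals [u) = {x : u ≼ x} and (u] = {x : x ≼ u} are closed. Then every nonempty compact subset D of X is chain-complete: every nonempty chain C ⊆ D has a least ≼-upper bound that belongs to D. -/
/-- Every nonempty compact subset of a Hausdorff topological space, partially ordered
with closed order intervals `[u)` and `(u]`, is chain-complete. -/
theorem compact_subset_chainComplete {X : Type*} [TopologicalSpace X] [T2Space X]
    [PartialOrder X]
    (hnat : ∀ u : X, IsClosed {x : X | u ≤ x} ∧ IsClosed {x : X | x ≤ u})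
    (D : Set X) (hD : D.Nonempty) (hcomp : IsCompact D) :
    ∀ C : Set X, C ⊆ D → C.Nonempty → IsChain (· ≤ ·) C →
      ∃ b ∈ D, IsLUB C b := by
  intro C hCD hCne hchain
  -- the filter of tails of the chain
  set T : C → Set X := fun c => {x | x ∈ C ∧ (c : X) ≤ x} with hT
  have hmemT : ∀ c : C, (c : X) ∈ T c := fun c => ⟨c.2, le_refl _⟩
  haveI : Nonempty C := hCne.to_subtype
  haveI : Nonempty X := ⟨hD.some⟩
  set F : Filter X := ⨅ c : C, Filter.principal (T c) with hF
  have hdir : Directed (· ≥ ·) fun c : C => Filter.principal (T c) := by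
    intro c₁ c₂
    rcases hchain.total c₁.2 c₂.2 with h | h
    · refine ⟨c₂, Filter.principal_mono.2 ?_, le_refl _⟩
      exact fun x hx => ⟨hx.1, h.trans hx.2⟩
    · refine ⟨c₁, le_refl _, Filter.principal_mono.2 ?_⟩
      exact fun x hx => ⟨hx.1, h.trans hx.2⟩
  haveI hne : F.NeBot := by
    refine Filter.iInf_neBot_of_directed hdir ?_
    intro c
    exact Filter.principal_neBot_iff.2 ⟨c, hmemT c⟩
  have hle : ∀ c : C, F ≤ Filter.principal (T c) := fun c => iInf_le _ c
  obtain ⟨c₀⟩ := (inferInstance : Nonempty C)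
  have hFD : F ≤ Filter.principal D := by
    refine (hle c₀).trans (Filter.principal_mono.2 ?_)
    exact fun x hx => hCD hx.1
  obtain ⟨b, hbD, hb⟩ := hcomp.exists_clusterPt hFD
  refine ⟨b, hbD, ?_, ?_⟩
  · -- b is an upper bound
    intro c hc
    have h1 : F ≤ Filter.principal {x : X | c ≤ x} := by
      refine (hle ⟨c, hc⟩).trans (Filter.principal_mono.2 ?_)
      exact fun x hx => hx.2
    have h2 : ClusterPt b (Filter.principal {x : X | c ≤ x}) := hb.mono h1
    have := (hnat c).1.closure_eq ▸ mem_closure_iff_clusterPt.2 h2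
    exact this
  · -- b is least among upper bounds
    intro u hu
    have h1 : F ≤ Filter.principal {x : X | x ≤ u} := by
      refine (hle c₀).trans (Filter.principal_mono.2 ?_)
      exact fun x hx => hu hx.1
    have h2 : ClusterPt b (Filter.principal {x : X | x ≤ u}) := hb.mono h1
    have := (hnat u).2.closure_eq ▸ mem_closure_iff_clusterPt.2 h2
    exact this
end

section
/- Let X be a reflexive real Banach space equipped with a partial order ≼ that is translation invariant (x ≼ y implies x + z ≼ y + z), invariant under multiplication by nonnegative scalars (x ≼ y implies αx ≼ αy for α ≥ 0), and whose positive cone {x : 0 ≼ x} is norm-closed. Then every nonempty norm-bounded, closed and convex subset D of X is chain-complete: every nonempty chain C ⊆ D has a least ≼-upper bound belonging to D. -/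
open NormedSpace Function

section aux
variable {X : Type*} [NormedAddCommGroup X] [NormedSpace ℝ X]

/-- Weakly-closed image of a closed convex set. -/
lemma aux_weak_closed (S : Set X) (hS : IsClosed S) (hconv : Convex ℝ S) :
    IsClosed (toWeakSpace ℝ X '' S) := by
  have := hconv.toWeakSpace_closure (𝕜 := ℝ)
  rw [hS.closure_eq] at this
  rw [this]
  exact isClosed_closure

/-- Closed bounded convex sets are weakly compact in a reflexive space. -/
lemma aux_weak_compact [CompleteSpace X]
    (hrefl : Function.Surjective (NormedSpace.inclusionInDoubleDual ℝ X))
    (S : Set X) (hS : IsClosed S) (hb : Bornology.IsBounded S) (hconv : Convex ℝ S) :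
    IsCompact (toWeakSpace ℝ X '' S) := by
  set J := NormedSpace.inclusionInDoubleDual ℝ X with hJ
  have hJinj : Function.Injective J := (NormedSpace.inclusionInDoubleDualLi ℝ (E := X)).injective
  set g : WeakDual ℝ (StrongDual ℝ X) → WeakSpace ℝ X :=
    fun φ => toWeakSpace ℝ X (surjInv hrefl (WeakDual.toStrongDual φ)) with hg
  have hgc : Continuous g := by
    apply WeakBilin.continuous_of_continuous_eval
    intro f
    have : (fun φ : WeakDual ℝ (StrongDual ℝ X) =>
        ((topDualPairing ℝ X).flip (g φ)) f) = fun φ => φ f := by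
      funext φ
      have h1 : J (surjInv hrefl (WeakDual.toStrongDual φ)) = WeakDual.toStrongDual φ :=
        surjInv_eq hrefl _
      have : f (surjInv hrefl (WeakDual.toStrongDual φ)) = φ f :=
        congrArg (fun ψ : StrongDual ℝ (StrongDual ℝ X) => ψ f) h1
      exact this
    rw [this]
    exact WeakDual.eval_continuous f
  set T : Set (WeakDual ℝ (StrongDual ℝ X)) := WeakDual.toStrongDual ⁻¹' (J '' S) with hT
  have hTb : Bornology.IsBounded (StrongDual.toWeakDual ⁻¹' T) := by
    have h2 : Bornology.IsBounded (J '' S) :=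
      ((NormedSpace.inclusionInDoubleDualLi ℝ (E := X)).lipschitz.isBounded_image hb)
    exact h2
  have hTclosed : IsClosed T := by
    have : T = g ⁻¹' (toWeakSpace ℝ X '' S) := by
      ext φ
      simp only [hT, Set.mem_preimage, Set.mem_image, g]
      constructor
      · rintro ⟨x, hx, hxφ⟩
        refine ⟨surjInv hrefl (WeakDual.toStrongDual φ), ?_, rfl⟩
        have : J (surjInv hrefl (WeakDual.toStrongDual φ)) = J x := by
          rw [surjInv_eq hrefl, hxφ]
        rwa [hJinj this]
      · rintro ⟨x, hx, hxφ⟩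
        have hx' : x = surjInv hrefl (WeakDual.toStrongDual φ) :=
          (toWeakSpace ℝ X).injective hxφ
        exact ⟨x, hx, by rw [hx']; exact surjInv_eq hrefl _⟩
    rw [this]
    exact (aux_weak_closed S hS hconv).preimage hgc
  have hTcompact : IsCompact T := WeakDual.isCompact_of_bounded_of_closed hTb hTclosed
  have himg : toWeakSpace ℝ X '' S = g '' T := by
    ext y
    constructor
    · rintro ⟨x, hx, rfl⟩
      refine ⟨WeakDual.toStrongDual.symm (J x), ?_, ?_⟩
      · simp [hT]
        exact ⟨x, hx, rfl⟩
      · simp [g]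
        apply hJinj
        rw [surjInv_eq hrefl]
    · rintro ⟨φ, hφ, rfl⟩
      obtain ⟨x, hx, hxφ⟩ := hφ
      refine ⟨surjInv hrefl (WeakDual.toStrongDual φ), ?_, rfl⟩
      have : J (surjInv hrefl (WeakDual.toStrongDual φ)) = J x := by
        rw [surjInv_eq hrefl, hxφ]
      rwa [hJinj this]
  rw [himg]
  exact hTcompact.image hgc
end aux




/-- Every nonempty norm-bounded closed convex subset of a partially ordered
reflexive Banach space is chain-complete. -/
theorem chainComplete_of_reflexive {X : Type*} [NormedAddCommGroup X] [NormedSpace ℝ X]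
    [CompleteSpace X] [PartialOrder X]
    (hadd : ∀ x y z : X, x ≤ y → x + z ≤ y + z)
    (hsmul : ∀ α : ℝ, 0 ≤ α → ∀ x y : X, x ≤ y → α • x ≤ α • y)
    (hcone : IsClosed {x : X | 0 ≤ x})
    (hrefl : Function.Surjective (NormedSpace.inclusionInDoubleDual ℝ X))
    (D : Set X) (hD : D.Nonempty) (hbdd : Bornology.IsBounded D)
    (hclosed : IsClosed D) (hconv : Convex ℝ D) :
    ∀ C : Set X, C ⊆ D → C.Nonempty → IsChain (· ≤ ·) C →
      ∃ b ∈ D, IsLUB C b := by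
  intro C hCD hCne hchain
  -- basic order facts
  have hle_iff : ∀ c x : X, c ≤ x ↔ 0 ≤ x - c := by
    intro c x
    constructor
    · intro h
      have := hadd c x (-c) h
      simpa [sub_eq_add_neg] using this
    · intro h
      have := hadd 0 (x - c) c h
      simpa using this
  have hle_iff' : ∀ u x : X, x ≤ u ↔ 0 ≤ u - x := by
    intro u x
    constructor
    · intro h
      have := hadd x u (-x) h
      simpa [sub_eq_add_neg] using this
    · intro h
      have := hadd 0 (u - x) x h
      simpa using this
  -- upper sets and lower sets are closed
  have hupper_closed : ∀ c : X, IsClosed {x : X | c ≤ x} := by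
    intro c
    have : {x : X | c ≤ x} = (fun x : X => x - c) ⁻¹' {x : X | 0 ≤ x} := by
      ext x; exact hle_iff c x
    rw [this]
    exact hcone.preimage (continuous_id.sub continuous_const)
  have hlower_closed : ∀ u : X, IsClosed {x : X | x ≤ u} := by
    intro u
    have : {x : X | x ≤ u} = (fun x : X => u - x) ⁻¹' {x : X | 0 ≤ x} := by
      ext x; exact hle_iff' u x
    rw [this]
    exact hcone.preimage (continuous_const.sub continuous_id)
  -- convexity of upper and lower sets
  have hcomb : ∀ (a b : ℝ) (x y u v : X), 0 ≤ a → 0 ≤ b → x ≤ u → y ≤ v →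
      a • x + b • y ≤ a • u + b • v := by
    intro a b x y u v ha hb hxu hyv
    have h1 : a • x ≤ a • u := hsmul a ha x u hxu
    have h2 : b • y ≤ b • v := hsmul b hb y v hyv
    have h3 : a • x + b • y ≤ a • u + b • y := hadd _ _ _ h1
    have h4 : b • y + a • u ≤ b • v + a • u := hadd _ _ _ h2
    calc a • x + b • y ≤ a • u + b • y := h3
      _ = b • y + a • u := add_comm _ _
      _ ≤ b • v + a • u := h4
      _ = a • u + b • v := add_comm _ _
  have hupper_conv : ∀ c : X, Convex ℝ {x : X | c ≤ x} := by
    intro c x hx y hy a b ha hb hab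
    have := hcomb a b c c x y ha hb hx hy
    simpa [← add_smul, hab] using this
  have hlower_conv : ∀ u : X, Convex ℝ {x : X | x ≤ u} := by
    intro u x hx y hy a b ha hb hab
    have := hcomb a b x y u u ha hb hx hy
    simpa [← add_smul, hab] using this
  -- weak compactness of D
  have hDcomp : IsCompact (toWeakSpace ℝ X '' D) :=
    aux_weak_compact hrefl D hclosed hbdd hconv
  -- the family of closed sets
  set U : Set X := {u : X | ∀ c ∈ C, c ≤ u} with hU
  let ι := (↥C) ⊕ (↥U)
  let t : ι → Set (WeakSpace ℝ X) := fun i =>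
    match i with
    | Sum.inl c => toWeakSpace ℝ X '' {x : X | (c : X) ≤ x}
    | Sum.inr u => toWeakSpace ℝ X '' {x : X | x ≤ (u : X)}
  have htc : ∀ i, IsClosed (t i) := by
    rintro (c | u)
    · exact aux_weak_closed _ (hupper_closed c) (hupper_conv c)
    · exact aux_weak_closed _ (hlower_closed u) (hlower_conv u)
  -- finite intersection property
  have hfip : ∀ F : Finset ι, ((toWeakSpace ℝ X '' D) ∩ ⋂ i ∈ F, t i).Nonempty := by
    intro F
    obtain ⟨c₀, hc₀⟩ := hCne
    -- the finite set of chain elements appearing in F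
    set s : Set X := {c : X | ∃ hc : c ∈ C, Sum.inl ⟨c, hc⟩ ∈ F} with hs
    have hsC : s ⊆ C := fun c hc => hc.1
    have hsfin : s.Finite := by
      have : s ⊆ (fun i : ι => match i with
          | Sum.inl c => (c : X)
          | Sum.inr u => (u : X)) '' (F : Set ι) := by
        rintro c ⟨hc, hcF⟩
        exact ⟨Sum.inl ⟨c, hc⟩, hcF, rfl⟩
      exact Set.Finite.subset (F.finite_toSet.image _) this
    -- find m ∈ C that dominates s
    have hm : ∃ m ∈ C, ∀ c ∈ s, c ≤ m := by
      rcases s.eq_empty_or_nonempty with hse | hsne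
      · exact ⟨c₀, hc₀, by simp [hse]⟩
      · obtain ⟨m, hms, hmax'⟩ := Set.Finite.exists_maximalFor id s hsfin hsne
        have hmax : ∀ c ∈ s, m ≤ c → m = c := fun c hc h => le_antisymm h (hmax' hc h)
        refine ⟨m, hsC hms, fun c hc => ?_⟩
        rcases eq_or_ne c m with rfl | hne
        · exact le_refl c
        · rcases hchain (hsC hc) (hsC hms) hne with h | h
          · exact h
          · exact (hne (hmax c hc h).symm).elim
    obtain ⟨m, hmC, hmdom⟩ := hm
    refine ⟨toWeakSpace ℝ X m, ⟨m, hCD hmC, rfl⟩, ?_⟩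
    simp only [Set.mem_iInter]
    rintro (c | u) hiF
    · exact ⟨m, hmdom (c : X) ⟨c.2, by simpa using hiF⟩, rfl⟩
    · exact ⟨m, u.2 m hmC, rfl⟩
  obtain ⟨y, hyD, hyt⟩ := hDcomp.inter_iInter_nonempty t htc hfip
  obtain ⟨b, hbD, rfl⟩ := hyD
  simp only [Set.mem_iInter] at hyt
  refine ⟨b, hbD, ?_, ?_⟩
  · intro c hc
    obtain ⟨x, hx, hxb⟩ := hyt (Sum.inl ⟨c, hc⟩)
    rwa [(toWeakSpace ℝ X).injective hxb] at hx
  · intro u hu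
    obtain ⟨x, hx, hxb⟩ := hyt (Sum.inr ⟨u, hu⟩)
    rwa [(toWeakSpace ℝ X).injective hxb] at hx
end

section
/- For n ≥ 1 set λ_n = 4^{−n} and define y_n : [−1,1] → ℝ by y_n(t) = t + 1 for t ∈ [−1, −λ_n], y_n(t) = −t²/(2λ_n) + 1 − λ_n/2 for t ∈ (−λ_n, 0], and y_n(t) = 1 − λ_n/2 for t ∈ (0, 1]. Then each y_n is continuously differentiable on [−1,1] with sup_{[−1,1]}|y_n| + sup_{[−1,1]}|y_n'| = 2 − λ_n/2 ≤ 2, and y_n(t) ≤ y_{n+1}(t) and y_n'(t) ≤ y_{n+1}'(t) for all t ∈ [−1,1]; but there exists no function w that is continuously differentiable on [−1,1] with sup_{[−1,1]}|w| + sup_{[−1,1]}|w'| ≤ 2 and satisfying w(t) ≥ y_n(t) and w'(t) ≥ y_n'(t) for all t ∈ [−1,1] and all n ≥ 1. -/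
open scoped Classical

/-- `λₙ = 4⁻ⁿ`. -/
noncomputable def lam7 (n : ℕ) : ℝ := (1 / 4 : ℝ) ^ n

/-- The function `yₙ` : `t + 1` on `[-1, -λₙ]`, `-t²/(2λₙ) + 1 - λₙ/2` on `(-λₙ, 0]`,
and `1 - λₙ/2` on `(0, 1]`. -/
noncomputable def y7 (n : ℕ) (t : ℝ) : ℝ :=
  if t ≤ -(lam7 n) then t + 1
  else if t ≤ 0 then -t ^ 2 / (2 * lam7 n) + 1 - lam7 n / 2
  else 1 - lam7 n / 2

/-- The derivative of `yₙ` : `1` on `[-1, -λₙ]`, `-t/λₙ` on `(-λₙ, 0]`, `0` on `(0, 1]`. -/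
noncomputable def yd7 (n : ℕ) (t : ℝ) : ℝ :=
  if t ≤ -(lam7 n) then 1
  else if t ≤ 0 then -t / lam7 n
  else 0


section AuxY7
open Filter Set

lemma lam7_pos (n : ℕ) : 0 < lam7 n := pow_pos (by norm_num) n
lemma lam7_le_one (n : ℕ) : lam7 n ≤ 1 := pow_le_one₀ (by norm_num) (by norm_num)
lemma lam7_le (n : ℕ) (h : 1 ≤ n) : lam7 n ≤ 1/4 := by
  have := pow_le_pow_of_le_one (a := (1/4:ℝ)) (by norm_num) (by norm_num) h
  simpa [lam7] using this
lemma lam7_succ (n : ℕ) : lam7 (n+1) = lam7 n / 4 := by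
  simp [lam7, pow_succ]; ring

lemma yd7_eq (n : ℕ) (t : ℝ) : yd7 n t = min 1 (max 0 (-t / lam7 n)) := by
  have hp := lam7_pos n
  unfold yd7
  split_ifs with h1 h2
  · rw [max_eq_right, min_eq_left]
    · rw [le_div_iff₀ hp]; linarith
    · exact div_nonneg (by linarith) hp.le
  · push_neg at h1
    rw [max_eq_right, min_eq_right]
    · rw [div_le_one hp]; linarith
    · exact div_nonneg (by linarith) hp.le
  · push_neg at h1 h2
    rw [max_eq_left, min_eq_right]
    · linarith
    · rw [div_nonpos_iff]; right; constructor <;> linarith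

lemma yd7_nonneg (n : ℕ) (t : ℝ) : 0 ≤ yd7 n t := by
  rw [yd7_eq]; exact le_min one_pos.le (le_max_left _ _)
lemma yd7_le_one (n : ℕ) (t : ℝ) : yd7 n t ≤ 1 := by
  rw [yd7_eq]; exact min_le_left _ _

-- middle formula
lemma mid_hasDerivAt (n : ℕ) (t : ℝ) :
    HasDerivAt (fun s : ℝ => -s ^ 2 / (2 * lam7 n) + 1 - lam7 n / 2) (-t / lam7 n) t := by
  have hp := lam7_pos n
  have h : HasDerivAt (fun s : ℝ => -s ^ 2 / (2 * lam7 n) + 1 - lam7 n / 2)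
      (-(2*t) / (2 * lam7 n)) t := by
    have := ((hasDerivAt_pow 2 t).neg.div_const (2 * lam7 n)).add_const (1:ℝ)
    simpa using (this.sub_const (lam7 n / 2))
  convert h using 1
  field_simp

lemma y7_hasDerivAt (n : ℕ) (t : ℝ) : HasDerivAt (y7 n) (yd7 n t) t := by
  have hp := lam7_pos n
  rcases lt_trichotomy t (-(lam7 n)) with h | h | h
  · -- t < -λ : y7 = t+1 nearby
    have he : y7 n =ᶠ[nhds t] (fun s => s + 1) :=
      eventuallyEq_of_mem (Iio_mem_nhds h) (fun s hs => by
        simp only [y7, if_pos (le_of_lt (mem_Iio.mp hs))])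
    have hd : yd7 n t = 1 := by simp [yd7, h.le]
    rw [hd]
    exact ((hasDerivAt_id t).add_const 1).congr_of_eventuallyEq he
  · -- t = -λ
    subst h
    have hd : yd7 n (-(lam7 n)) = 1 := by simp [yd7]
    rw [hd]
    have hleft : HasDerivWithinAt (y7 n) 1 (Iic (-(lam7 n))) (-(lam7 n)) := by
      refine HasDerivWithinAt.congr (f := fun s => s + 1) ?_ ?_ ?_
      · exact ((hasDerivAt_id _).add_const 1).hasDerivWithinAt
      · intro s hs; simp only [y7, if_pos (mem_Iic.mp hs)]
      · simp [y7]
    have hright : HasDerivWithinAt (y7 n) 1 (Ici (-(lam7 n))) (-(lam7 n)) := by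
      have hg : HasDerivWithinAt (fun s : ℝ => -s ^ 2 / (2 * lam7 n) + 1 - lam7 n / 2)
          1 (Ici (-(lam7 n))) (-(lam7 n)) := by
        have := (mid_hasDerivAt n (-(lam7 n))).hasDerivWithinAt (s := Ici (-(lam7 n)))
        rwa [neg_neg, div_self hp.ne'] at this
      refine hg.congr_of_eventuallyEq ?_ ?_
      · have h0 : Iio (0:ℝ) ∈ nhds (-(lam7 n)) := Iio_mem_nhds (by linarith)
        filter_upwards [eventually_mem_nhdsWithin,
          eventually_nhdsWithin_of_eventually_nhds (eventually_of_mem h0 (fun s hs => hs))]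
          with s hs hs0
        rcases eq_or_lt_of_le (mem_Ici.mp hs) with heq | hlt
        · rw [← heq]; simp only [y7, if_pos le_rfl]; field_simp; ring
        · simp only [y7, if_neg (not_le.mpr hlt), if_pos (le_of_lt (mem_Iio.mp hs0))]
      · simp only [y7, if_pos le_rfl]; field_simp; ring
    have := hleft.union hright
    rw [Iic_union_Ici] at this
    exact hasDerivWithinAt_univ.mp this
  · rcases lt_trichotomy t 0 with h0 | h0 | h0
    · -- -λ < t < 0
      have hd : yd7 n t = -t / lam7 n := by
        simp only [yd7, if_neg (not_le.mpr h), if_pos h0.le]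
      rw [hd]
      have he : y7 n =ᶠ[nhds t] (fun s => -s ^ 2 / (2 * lam7 n) + 1 - lam7 n / 2) :=
        eventuallyEq_of_mem (Ioo_mem_nhds h h0) (fun s hs => by
          simp only [y7, if_neg (not_le.mpr hs.1), if_pos hs.2.le])
      exact (mid_hasDerivAt n t).congr_of_eventuallyEq he
    · -- t = 0
      subst h0
      have hd : yd7 n 0 = 0 := by
        simp [yd7, not_le.mpr (neg_neg_iff_pos.mpr hp)]
      rw [hd]
      have hleft : HasDerivWithinAt (y7 n) 0 (Iic (0:ℝ)) 0 := by
        have hg : HasDerivWithinAt (fun s : ℝ => -s ^ 2 / (2 * lam7 n) + 1 - lam7 n / 2)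
            0 (Iic (0:ℝ)) 0 := by
          have := (mid_hasDerivAt n 0).hasDerivWithinAt (s := Iic (0:ℝ))
          simpa using this
        refine hg.congr_of_eventuallyEq ?_ ?_
        · have h0 : Ioi (-(lam7 n)) ∈ nhds (0:ℝ) := Ioi_mem_nhds (by linarith)
          filter_upwards [eventually_mem_nhdsWithin,
            eventually_nhdsWithin_of_eventually_nhds (eventually_of_mem h0 (fun s hs => hs))]
            with s hs hs0
          simp only [y7, if_neg (not_le.mpr (mem_Ioi.mp hs0)), if_pos (mem_Iic.mp hs)]
        · simp [y7, not_le.mpr (neg_neg_iff_pos.mpr hp)]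
      have hright : HasDerivWithinAt (y7 n) 0 (Ici (0:ℝ)) 0 := by
        refine HasDerivWithinAt.congr (f := fun _ => 1 - lam7 n / 2)
          (hasDerivWithinAt_const _ _ _) ?_ ?_
        · intro s hs
          rcases eq_or_lt_of_le (mem_Ici.mp hs) with heq | hlt
          · rw [← heq]; simp [y7, not_le.mpr (neg_neg_iff_pos.mpr hp)]
          · simp only [y7, if_neg (by linarith : ¬ s ≤ -(lam7 n)), if_neg (not_le.mpr hlt)]
        · simp [y7, not_le.mpr (neg_neg_iff_pos.mpr hp)]
      have := hleft.union hright
      rw [Iic_union_Ici] at this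
      exact hasDerivWithinAt_univ.mp this
    · -- t > 0
      have hd : yd7 n t = 0 := by
        simp only [yd7, if_neg (by linarith : ¬ t ≤ -(lam7 n)), if_neg (not_le.mpr h0)]
      rw [hd]
      have he : y7 n =ᶠ[nhds t] (fun _ => 1 - lam7 n / 2) :=
        eventuallyEq_of_mem (Ioi_mem_nhds h0) (fun s hs => by
          have : (0:ℝ) < s := hs
          simp only [y7, if_neg (by linarith : ¬ s ≤ -(lam7 n)), if_neg (not_le.mpr this)])
      exact (hasDerivAt_const t _).congr_of_eventuallyEq he

lemma y7_bounds (n : ℕ) (hn : 1 ≤ n) {t : ℝ} (ht : t ∈ Icc (-1:ℝ) 1) :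
    0 ≤ y7 n t ∧ y7 n t ≤ 1 - lam7 n / 2 := by
  have hp := lam7_pos n
  have hl := lam7_le n hn
  obtain ⟨ht1, ht2⟩ := ht
  unfold y7
  split_ifs with h1 h2
  · constructor <;> nlinarith
  · push_neg at h1
    have hA : t^2/(2*lam7 n) ≤ lam7 n / 2 := by
      rw [div_le_div_iff₀ (by positivity) two_pos]; nlinarith
    have hB : (0:ℝ) ≤ t^2/(2*lam7 n) := by positivity
    rw [neg_div]
    constructor <;> linarith
  · constructor <;> linarith

lemma y7_mono (n : ℕ) (t : ℝ) : y7 n t ≤ y7 (n+1) t := by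
  have hp := lam7_pos n
  have hs : lam7 (n+1) = lam7 n / 4 := lam7_succ n
  have hle : -(lam7 n) ≤ -(lam7 (n+1)) := by rw [hs]; linarith
  rcases le_or_gt t (-(lam7 n)) with h1 | h1
  · simp only [y7, if_pos h1, if_pos (h1.trans hle)]; exact le_rfl
  · rcases le_or_gt t 0 with h2 | h2
    · rcases le_or_gt t (-(lam7 (n+1))) with h3 | h3
      · simp only [y7, if_neg (not_le.mpr h1), if_pos h2, if_pos h3, neg_div]
        have hK : -(t + lam7 n / 2) ≤ t^2/(2*lam7 n) := by
          rw [le_div_iff₀ (by positivity)]; nlinarith [sq_nonneg (t + lam7 n)]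
        linarith
      · simp only [y7, if_neg (not_le.mpr h1), if_pos h2, if_neg (not_le.mpr h3), neg_div]
        rw [hs]
        have e1 : -(t^2/(2*(lam7 n/4))) - (-(t^2/(2*lam7 n))) = -(3*t^2/(2*lam7 n)) := by
          field_simp; ring
        have hq : 3*t^2/(2*lam7 n) ≤ 3*lam7 n/32 := by
          rw [div_le_div_iff₀ (by positivity) (by norm_num)]
          rw [hs] at h3
          nlinarith
        linarith
    · simp only [y7, if_neg (by linarith : ¬ t ≤ -(lam7 n)),
        if_neg (by rw [hs]; intro hc; linarith : ¬ t ≤ -(lam7 (n+1))),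
        if_neg (not_le.mpr h2)]
      rw [hs]; linarith

lemma yd7_mono (n : ℕ) (t : ℝ) : yd7 n t ≤ yd7 (n+1) t := by
  have hp := lam7_pos n
  have hp' := lam7_pos (n+1)
  rw [yd7_eq, yd7_eq]
  rcases le_or_gt t 0 with h | h
  · refine min_le_min le_rfl (max_le_max le_rfl ?_)
    rw [div_le_div_iff₀ hp hp']
    have : lam7 (n+1) ≤ lam7 n := by rw [lam7_succ]; linarith
    nlinarith
  · have e1 : max 0 (-t / lam7 n) = 0 := max_eq_left (by
      rw [div_nonpos_iff]; right; exact ⟨by linarith, hp.le⟩)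
    have e2 : max 0 (-t / lam7 (n+1)) = 0 := max_eq_left (by
      rw [div_nonpos_iff]; right; exact ⟨by linarith, hp'.le⟩)
    rw [e1, e2]

lemma lam7_tendsto : Filter.Tendsto lam7 Filter.atTop (nhds 0) := by
  have := tendsto_pow_atTop_nhds_zero_of_lt_one
    (by norm_num : (0:ℝ) ≤ 1/4) (by norm_num : (1/4:ℝ) < 1)
  exact this

lemma y7_eval_nonneg (n : ℕ) {t : ℝ} (ht : 0 ≤ t) : y7 n t = 1 - lam7 n / 2 := by
  have hp := lam7_pos n
  rcases eq_or_lt_of_le ht with h | h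
  · simp only [y7, ← h, if_neg (by intro hc; norm_num at hc; linarith : ¬ (0:ℝ) ≤ -(lam7 n)),
      if_pos le_rfl]
    norm_num
  · simp only [y7, if_neg (by intro hc; linarith : ¬ t ≤ -(lam7 n)), if_neg (not_le.mpr h)]

lemma sup_abs_y7 (n : ℕ) (hn : 1 ≤ n) :
    (⨆ t : Set.Icc (-1 : ℝ) 1, |y7 n t.1|) = 1 - lam7 n / 2 := by
  haveI : Nonempty (Set.Icc (-1:ℝ) 1) := ⟨⟨0, by norm_num⟩⟩
  have hp := lam7_pos n
  have hl := lam7_le n hn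
  have hb : ∀ t : Set.Icc (-1:ℝ) 1, |y7 n t.1| ≤ 1 - lam7 n / 2 := by
    intro t
    obtain ⟨h0, h1⟩ := y7_bounds n hn t.2
    rw [abs_le]; constructor <;> [linarith; linarith]
  refine le_antisymm (ciSup_le hb) ?_
  refine le_ciSup_of_le ⟨1 - lam7 n / 2, ?_⟩ ⟨1, by norm_num⟩ ?_
  · rintro x ⟨t, rfl⟩; exact hb t
  · rw [y7_eval_nonneg n (by norm_num : (0:ℝ) ≤ 1), abs_of_nonneg (by linarith)]

lemma sup_abs_yd7 (n : ℕ) (hn : 1 ≤ n) :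
    (⨆ t : Set.Icc (-1 : ℝ) 1, |yd7 n t.1|) = 1 := by
  haveI : Nonempty (Set.Icc (-1:ℝ) 1) := ⟨⟨0, by norm_num⟩⟩
  have hb : ∀ t : Set.Icc (-1:ℝ) 1, |yd7 n t.1| ≤ 1 := by
    intro t
    rw [abs_le]; exact ⟨by linarith [yd7_nonneg n t.1], yd7_le_one n t.1⟩
  refine le_antisymm (ciSup_le hb) ?_
  refine le_ciSup_of_le ⟨1, ?_⟩ ⟨-1, by norm_num⟩ ?_
  · rintro x ⟨t, rfl⟩; exact hb t
  · have : yd7 n (-1) = 1 := by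
      simp only [yd7, if_pos (by linarith [lam7_le_one n] : (-1:ℝ) ≤ -(lam7 n))]
    rw [this, abs_one]

theorem y7_aux_no_ub :
    ¬ ∃ w w' : ℝ → ℝ,
        (∀ t ∈ Set.Icc (-1 : ℝ) 1, HasDerivWithinAt w (w' t) (Set.Icc (-1 : ℝ) 1) t) ∧
        ContinuousOn w' (Set.Icc (-1 : ℝ) 1) ∧
        (⨆ t : Set.Icc (-1 : ℝ) 1, |w t.1|) + (⨆ t : Set.Icc (-1 : ℝ) 1, |w' t.1|) ≤ 2 ∧
        (∀ n : ℕ, 1 ≤ n → ∀ t ∈ Set.Icc (-1 : ℝ) 1, y7 n t ≤ w t ∧ yd7 n t ≤ w' t) := by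
  rintro ⟨w, w', hderiv, hcont, hsum, hdom⟩
  haveI : Nonempty (Icc (-1:ℝ) 1) := ⟨⟨0, by norm_num⟩⟩
  have h0S : (0:ℝ) ∈ Icc (-1:ℝ) 1 := by norm_num
  have hwcont : ContinuousOn w (Icc (-1:ℝ) 1) :=
    fun t ht => (hderiv t ht).continuousWithinAt
  -- bounded ranges
  have hbw : BddAbove (Set.range fun t : Icc (-1:ℝ) 1 => |w t.1|) := by
    rw [show (Set.range fun t : Icc (-1:ℝ) 1 => |w t.1|) = (fun t => |w t|) '' Icc (-1:ℝ) 1 from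
      Set.range_restrict (fun t => |w t|) (Icc (-1:ℝ) 1)]
    exact isCompact_Icc.bddAbove_image hwcont.abs
  have hbw' : BddAbove (Set.range fun t : Icc (-1:ℝ) 1 => |w' t.1|) := by
    rw [show (Set.range fun t : Icc (-1:ℝ) 1 => |w' t.1|) = (fun t => |w' t|) '' Icc (-1:ℝ) 1 from
      Set.range_restrict (fun t => |w' t|) (Icc (-1:ℝ) 1)]
    exact isCompact_Icc.bddAbove_image hcont.abs
  -- w ≥ 1 on [0,1]
  have hw1 : ∀ t ∈ Icc (0:ℝ) 1, 1 ≤ w t := by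
    intro t ht
    have htS : t ∈ Icc (-1:ℝ) 1 := ⟨by linarith [ht.1], ht.2⟩
    have hlim : Filter.Tendsto (fun n => 1 - lam7 n / 2) Filter.atTop (nhds 1) := by
      have := (tendsto_const_nhds (x := (1:ℝ)) (f := Filter.atTop (α := ℕ))).sub
        (lam7_tendsto.div_const 2)
      simpa using this
    refine le_of_tendsto hlim ?_
    filter_upwards [Filter.eventually_ge_atTop 1] with n hn
    have := (hdom n hn t htS).1
    rwa [y7_eval_nonneg n ht.1] at this
  -- w' ≥ 1 on [-1,0)
  have hwd1 : ∀ t ∈ Ico (-1:ℝ) 0, 1 ≤ w' t := by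
    intro t ht
    have hpos : (0:ℝ) < -t := by linarith [ht.2]
    obtain ⟨n, hn1, hn2⟩ := ((lam7_tendsto.eventually_lt_const hpos).and
      (Filter.eventually_ge_atTop 1)).exists
    have htS : t ∈ Icc (-1:ℝ) 1 := ⟨ht.1, by linarith [ht.2]⟩
    have := (hdom n hn2 t htS).2
    rwa [show yd7 n t = 1 from by simp only [yd7, if_pos (by linarith : t ≤ -(lam7 n))]] at this
  -- w' 0 ≥ 1 by continuity from the left
  haveI hne1 : (nhdsWithin (0:ℝ) (Ico (-1:ℝ) 0)).NeBot := by
    rw [← mem_closure_iff_nhdsWithin_neBot, closure_Ico (by norm_num : (-1:ℝ) ≠ 0)]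
    norm_num
  have hwd0 : 1 ≤ w' 0 := by
    have hc : Filter.Tendsto w' (nhdsWithin (0:ℝ) (Ico (-1:ℝ) 0)) (nhds (w' 0)) :=
      (hcont 0 h0S).mono_left (nhdsWithin_mono 0 (fun s hs => ⟨hs.1, by linarith [hs.2]⟩))
    exact ge_of_tendsto hc (eventually_mem_nhdsWithin.mono fun s hs => hwd1 s hs)
  -- supremum of |w'| ≥ 1, hence supremum of |w| ≤ 1
  have hB : 1 ≤ ⨆ t : Icc (-1:ℝ) 1, |w' t.1| :=
    le_ciSup_of_le hbw' ⟨0, h0S⟩ (hwd0.trans (le_abs_self _))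
  have hA : ∀ t ∈ Icc (-1:ℝ) 1, w t ≤ 1 := by
    intro t ht
    have h1 : |w t| ≤ ⨆ t : Icc (-1:ℝ) 1, |w t.1| := le_ciSup hbw ⟨t, ht⟩
    have h2 := le_abs_self (w t)
    linarith
  -- w ≡ 1 on [0,1]
  have hconst : ∀ t ∈ Icc (0:ℝ) 1, w t = 1 :=
    fun t ht => le_antisymm (hA t ⟨by linarith [ht.1], ht.2⟩) (hw1 t ht)
  -- w' = 0 on (0,1)
  have hzero : ∀ s ∈ Ioo (0:ℝ) 1, w' s = 0 := by
    intro s hs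
    have hS_nhds : Icc (-1:ℝ) 1 ∈ nhds s := Icc_mem_nhds (by linarith [hs.1]) hs.2
    have hd : HasDerivAt w (w' s) s :=
      (hderiv s ⟨by linarith [hs.1], hs.2.le⟩).hasDerivAt hS_nhds
    have he : (fun _ => (1:ℝ)) =ᶠ[nhds s] w :=
      Filter.eventuallyEq_of_mem (Ioo_mem_nhds hs.1 hs.2)
        (fun u hu => (hconst u ⟨hu.1.le, hu.2.le⟩).symm)
    exact ((hasDerivAt_const s (1:ℝ)).unique (hd.congr_of_eventuallyEq he)).symm
  haveI hne2 : (nhdsWithin (0:ℝ) (Ioo (0:ℝ) 1)).NeBot := by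
    rw [← mem_closure_iff_nhdsWithin_neBot, closure_Ioo (by norm_num : (0:ℝ) ≠ 1)]
    norm_num
  have hwd0' : w' 0 ≤ 0 := by
    have hc : Filter.Tendsto w' (nhdsWithin (0:ℝ) (Ioo (0:ℝ) 1)) (nhds (w' 0)) :=
      (hcont 0 h0S).mono_left (nhdsWithin_mono 0
        (fun s hs => ⟨by linarith [hs.1], hs.2.le⟩))
    exact le_of_tendsto hc (eventually_mem_nhdsWithin.mono fun s hs => (hzero s hs).le)
  linarith


end AuxY7

/-- For `λₙ = 4⁻ⁿ`, the piecewise functions `yₙ` are continuously differentiable on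
`[-1,1]` with derivative `yd7 n`, have C¹-norm `sup |yₙ| + sup |yₙ'| = 2 - λₙ/2 ≤ 2`,
form an increasing chain (`yₙ ≤ yₙ₊₁` and `yₙ' ≤ yₙ₊₁'` pointwise on `[-1,1]`),
but there is no C¹ function `w` on `[-1,1]` with `sup |w| + sup |w'| ≤ 2` dominating
every `yₙ` together with its derivative. -/
theorem y7_no_upper_bound_in_ball :
    (∀ n : ℕ, 1 ≤ n → ∀ t ∈ Set.Icc (-1 : ℝ) 1, HasDerivAt (y7 n) (yd7 n t) t) ∧
    (∀ n : ℕ, 1 ≤ n → ContinuousOn (yd7 n) (Set.Icc (-1 : ℝ) 1)) ∧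
    (∀ n : ℕ, 1 ≤ n →
      (⨆ t : Set.Icc (-1 : ℝ) 1, |y7 n t.1|) + (⨆ t : Set.Icc (-1 : ℝ) 1, |yd7 n t.1|)
        = 2 - lam7 n / 2 ∧
      (⨆ t : Set.Icc (-1 : ℝ) 1, |y7 n t.1|) + (⨆ t : Set.Icc (-1 : ℝ) 1, |yd7 n t.1|) ≤ 2) ∧
    (∀ n : ℕ, 1 ≤ n → ∀ t ∈ Set.Icc (-1 : ℝ) 1,
      y7 n t ≤ y7 (n + 1) t ∧ yd7 n t ≤ yd7 (n + 1) t) ∧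
    ¬ ∃ w w' : ℝ → ℝ,
        (∀ t ∈ Set.Icc (-1 : ℝ) 1, HasDerivWithinAt w (w' t) (Set.Icc (-1 : ℝ) 1) t) ∧
        ContinuousOn w' (Set.Icc (-1 : ℝ) 1) ∧
        (⨆ t : Set.Icc (-1 : ℝ) 1, |w t.1|) + (⨆ t : Set.Icc (-1 : ℝ) 1, |w' t.1|) ≤ 2 ∧
        (∀ n : ℕ, 1 ≤ n → ∀ t ∈ Set.Icc (-1 : ℝ) 1, y7 n t ≤ w t ∧ yd7 n t ≤ w' t) := by
  refine ⟨fun n _ t _ => y7_hasDerivAt n t, ?_, ?_, fun n _ t _ => ⟨y7_mono n t, yd7_mono n t⟩,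
    y7_aux_no_ub⟩
  · intro n _
    have he : yd7 n = fun t => min 1 (max 0 (-t / lam7 n)) := funext (yd7_eq n)
    rw [he]
    exact (continuous_const.min
      (continuous_const.max (continuous_id.neg.div_const _))).continuousOn
  · intro n hn
    rw [sup_abs_y7 n hn, sup_abs_yd7 n hn]
    constructor
    · ring
    · linarith [lam7_pos n]
end

section
/- Let X be a real Banach space with a partial order ≼ that is translation invariant, invariant under multiplication by nonnegative scalars, has norm-closed positive cone {x : 0 ≼ x}, and is regular (every ≼-increasing sequence that has a ≼-upper bound is norm-convergent). Then every nonempty norm-closed inductive subset D of X is chain-complete: every nonempty chain C ⊆ D has a least ≼-upper bound belonging to D. -/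
/-- Every nonempty norm-closed inductive subset of a regular partially ordered Banach
space is chain-complete. -/
theorem chainComplete_of_regular {X : Type*} [NormedAddCommGroup X] [NormedSpace ℝ X]
    [CompleteSpace X] [PartialOrder X]
    (hadd : ∀ x y z : X, x ≤ y → x + z ≤ y + z)
    (hsmul : ∀ α : ℝ, 0 ≤ α → ∀ x y : X, x ≤ y → α • x ≤ α • y)
    (hcone : IsClosed {x : X | 0 ≤ x})
    (hreg : ∀ x : ℕ → X, (∀ n, x n ≤ x (n + 1)) → (∃ b : X, ∀ n, x n ≤ b) →
      ∃ l : X, Filter.Tendsto x Filter.atTop (nhds l))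
    (D : Set X) (hD : D.Nonempty) (hclosed : IsClosed D)
    (hind : ∀ C : Set X, C ⊆ D → C.Nonempty → IsChain (· ≤ ·) C →
      ∃ b ∈ D, ∀ c ∈ C, c ≤ b) :
    ∀ C : Set X, C ⊆ D → C.Nonempty → IsChain (· ≤ ·) C → ∃ b ∈ D, IsLUB C b := by
  classical
  intro C hCD hCne hchain
  obtain ⟨b, hbD, hb⟩ := hind C hCD hCne hchain
  -- limits respect the order (closed cone)
  have keyle : ∀ (a : ℕ → X) (l u : X), Filter.Tendsto a Filter.atTop (nhds l) →
      (∀ n, a n ≤ u) → l ≤ u := by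
    intro a l u ha hle
    have h1 : Filter.Tendsto (fun n => u - a n) Filter.atTop (nhds (u - l)) :=
      Filter.Tendsto.sub tendsto_const_nhds ha
    have h2 : (u - l) ∈ {x : X | 0 ≤ x} := by
      refine hcone.mem_of_tendsto h1 (Filter.Eventually.of_forall fun n => ?_)
      have := hadd (a n) u (-(a n)) (hle n)
      simpa [sub_eq_add_neg] using this
    have := hadd 0 (u - l) l h2
    simpa using this
  have keyge : ∀ (a : ℕ → X) (l c : X), Filter.Tendsto a Filter.atTop (nhds l) →
      (∀ᶠ n in Filter.atTop, c ≤ a n) → c ≤ l := by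
    intro a l c ha hle
    have h1 : Filter.Tendsto (fun n => a n - c) Filter.atTop (nhds (l - c)) :=
      ha.sub tendsto_const_nhds
    have h2 : (l - c) ∈ {x : X | 0 ≤ x} := by
      refine hcone.mem_of_tendsto h1 (hle.mono fun n hn => ?_)
      have := hadd c (a n) (-c) hn
      simpa [sub_eq_add_neg] using this
    have := hadd 0 (l - c) c h2
    simpa using this
  -- for every ε > 0 there is a "near top" element of the chain
  have claim : ∀ ε : ℝ, 0 < ε → ∃ z ∈ C, ∀ c' ∈ C, z ≤ c' → ‖c' - z‖ ≤ ε := by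
    intro ε hε
    by_contra hcon
    push_neg at hcon
    choose g hg1 hg2 hg3 using fun z : C => hcon (z : X) z.2
    obtain ⟨c0, hc0⟩ := hCne
    let f : ℕ → C := fun n => Nat.recAux ⟨c0, hc0⟩ (fun _ p => ⟨g p, hg1 p⟩) n
    have hfmono : ∀ n, (f n).1 ≤ (f (n + 1)).1 := by intro n; exact hg2 (f n)
    obtain ⟨l, hl⟩ := hreg (fun n => (f n).1) hfmono ⟨b, by intro n; exact hb (f n).1 (f n).2⟩
    have hc : CauchySeq fun n => (f n).1 := hl.cauchySeq
    rw [Metric.cauchySeq_iff] at hc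
    obtain ⟨N, hN⟩ := hc ε hε
    have h1 : dist (f (N + 1)).1 (f N).1 < ε :=
      hN (N + 1) (Nat.le_succ N) N le_rfl
    have h2 : ε < ‖(f (N + 1)).1 - (f N).1‖ := hg3 (f N)
    rw [dist_eq_norm] at h1
    exact absurd h1 (not_lt.2 h2.le)
  choose z hzC hz using fun n : ℕ => claim ((1 / 2 : ℝ) ^ n) (by positivity)
  -- build an increasing sequence dominating the z's
  let y : ℕ → X := fun n =>
    Nat.recAux (motive := fun _ => X) (z 0)
      (fun m ym => @ite X (z (m + 1) ≤ ym) (Classical.propDecidable _) ym (z (m + 1))) n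
  have hyC : ∀ n, y n ∈ C := by
    intro n
    induction n with
    | zero => exact hzC 0
    | succ m ih =>
      show (@ite X (z (m + 1) ≤ y m) (Classical.propDecidable _) (y m) (z (m + 1))) ∈ C
      split <;> [exact ih; exact hzC (m + 1)]
  have hzy : ∀ n, z n ≤ y n := by
    intro n
    cases n with
    | zero => exact le_rfl
    | succ m =>
      show z (m + 1) ≤ @ite X (z (m + 1) ≤ y m) (Classical.propDecidable _) (y m) (z (m + 1))
      split <;> [assumption; exact le_rfl]
  have hymono : ∀ n, y n ≤ y (n + 1) := by
    intro n
    show y n ≤ @ite X (z (n + 1) ≤ y n) (Classical.propDecidable _) (y n) (z (n + 1))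
    split
    · exact le_rfl
    · rcases eq_or_ne (y n) (z (n + 1)) with h | h
      · exact h.le
      · rcases hchain (hyC n) (hzC (n + 1)) h with h' | h'
        · exact h'
        · exact absurd h' (by assumption)
  have hymono' : Monotone y := monotone_nat_of_le_succ hymono
  obtain ⟨l, hl⟩ := hreg y hymono ⟨b, fun n => hb _ (hyC n)⟩
  have hlD : l ∈ D := hclosed.mem_of_tendsto hl
    (Filter.Eventually.of_forall fun n => hCD (hyC n))
  have hynl : ∀ n, y n ≤ l := fun n =>
    keyge y l (y n) hl (Filter.eventually_atTop.2 ⟨n, fun m hm => hymono' hm⟩)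
  have hub : ∀ c ∈ C, c ≤ l := by
    intro c hc
    rcases Classical.em (∃ n, c ≤ y n) with ⟨n, hn⟩ | hcase
    · exact hn.trans (hynl n)
    · push_neg at hcase
      have hyc : ∀ n, y n ≤ c := by
        intro n
        rcases eq_or_ne (y n) c with h | h
        · exact h.le
        · exact (hchain (hyC n) hc h).resolve_right (hcase n)
      -- then y n → c, so c = l
      have hbound : ∀ n, ‖y n - c‖ ≤ (1 / 2 : ℝ) ^ n + (1 / 2 : ℝ) ^ n := by
        intro n
        have h1 : ‖c - z n‖ ≤ (1 / 2 : ℝ) ^ n := hz n c hc ((hzy n).trans (hyc n))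
        have h2 : ‖y n - z n‖ ≤ (1 / 2 : ℝ) ^ n := hz n (y n) (hyC n) (hzy n)
        calc ‖y n - c‖ = ‖(y n - z n) - (c - z n)‖ := by abel_nf
          _ ≤ ‖y n - z n‖ + ‖c - z n‖ := norm_sub_le _ _
          _ ≤ _ := add_le_add h2 h1
      have htz : Filter.Tendsto (fun n => ‖y n - c‖) Filter.atTop (nhds 0) := by
        have hlim : Filter.Tendsto (fun n : ℕ => (1 / 2 : ℝ) ^ n + (1 / 2 : ℝ) ^ n)
            Filter.atTop (nhds 0) := by
          have := tendsto_pow_atTop_nhds_zero_of_lt_one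
            (by norm_num : (0:ℝ) ≤ 1 / 2) (by norm_num : (1/2 : ℝ) < 1)
          simpa using this.add this
        exact squeeze_zero (fun n => norm_nonneg _) hbound hlim
      have hyc' : Filter.Tendsto y Filter.atTop (nhds c) :=
        tendsto_iff_norm_sub_tendsto_zero.2 htz
      exact (tendsto_nhds_unique hyc' hl).le
  refine ⟨l, hlD, hub, fun u hu => keyle y l u hl fun n => hu (hyC n)⟩
end

section
/- Let X be a real Banach space with a partial order ≼ that is translation invariant, invariant under multiplication by nonnegative scalars, has norm-closed positive cone, and is regular (every ≼-increasing sequence with a ≼-upper bound is norm-convergent). Then every nonempty norm-closed bi-inductive subset D of X is bi-chain-complete: every nonempty chain C ⊆ D has both a least ≼-upper bound and a greatest ≼-lower bound belonging to D. -/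
open Filter

/-- Auxiliary lemma: for a reflexive transitive relation `r` on a normed group that is
sequentially closed and "regular", every chain in a closed set with an `r`-upper bound has
a least `r`-upper bound which is a limit of a sequence from the chain, hence in the set. -/
lemma exists_least_upper_bound_aux {X : Type*} [NormedAddCommGroup X] (r : X → X → Prop)
    (hrefl : ∀ x, r x x) (htrans : ∀ x y z, r x y → r y z → r x z)
    (hcl : ∀ (f : ℕ → X) (y l : X), (∀ n, r (f n) y) →
      Filter.Tendsto f Filter.atTop (nhds l) → r l y)
    (hcl' : ∀ (f : ℕ → X) (y l : X), (∀ n, r y (f n)) →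
      Filter.Tendsto f Filter.atTop (nhds l) → r y l)
    (hreg : ∀ x : ℕ → X, (∀ n, r (x n) (x (n + 1))) → (∃ b, ∀ n, r (x n) b) →
      ∃ l, Filter.Tendsto x Filter.atTop (nhds l))
    (D : Set X) (hDcl : IsClosed D)
    (C : Set X) (hCD : C ⊆ D) (hCne : C.Nonempty) (hchain : IsChain r C)
    (b : X) (hb : ∀ c ∈ C, r c b) :
    ∃ l ∈ D, (∀ c ∈ C, r c l) ∧ ∀ u, (∀ c ∈ C, r c u) → r l u := by
  classical
  set S : X → Set ℝ := fun x => (fun c => min 1 ‖c - x‖) '' {c ∈ C | r x c} with hS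
  set ρ : X → ℝ := fun x => sSup (S x) with hρdef
  have hSbdd : ∀ x, BddAbove (S x) := by
    intro x
    exact ⟨1, by rintro _ ⟨c, _, rfl⟩; exact min_le_left _ _⟩
  have hSne : ∀ x ∈ C, (S x).Nonempty := by
    intro x hx
    exact ⟨min 1 ‖x - x‖, ⟨x, ⟨hx, hrefl x⟩, rfl⟩⟩
  have hρ0 : ∀ x ∈ C, 0 ≤ ρ x := by
    intro x hx
    have h0 : (0 : ℝ) ∈ S x := ⟨x, ⟨hx, hrefl x⟩, by simp⟩
    exact le_csSup (hSbdd x) h0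
  have hmem_le : ∀ x c, c ∈ C → r x c → min 1 ‖c - x‖ ≤ ρ x := by
    intro x c hc hxc
    exact le_csSup (hSbdd x) ⟨c, ⟨hc, hxc⟩, rfl⟩
  have hstep : ∀ x ∈ C, ∃ y, y ∈ C ∧ r x y ∧ ρ x ≤ 2 * min 1 ‖y - x‖ := by
    intro x hx
    rcases le_or_gt (ρ x) 0 with h | h
    · refine ⟨x, hx, hrefl x, ?_⟩
      simp only [sub_self, norm_zero]
      have : min (1:ℝ) 0 = 0 := min_eq_right zero_le_one
      rw [this]; linarith
    · obtain ⟨s, hs, hlt⟩ := exists_lt_of_lt_csSup (hSne x hx)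
        (show ρ x / 2 < ρ x by linarith)
      obtain ⟨c, ⟨hc, hxc⟩, rfl⟩ := hs
      exact ⟨c, hc, hxc, by linarith⟩
  choose! g hg1 hg2 hg3 using hstep
  obtain ⟨c0, hc0⟩ := hCne
  set x : ℕ → X := fun n => g^[n] c0 with hxdef
  have hxsucc : ∀ n, x (n + 1) = g (x n) := fun n => Function.iterate_succ_apply' g n c0
  have hxC : ∀ n, x n ∈ C := by
    intro n
    induction n with
    | zero => exact hc0
    | succ k ih => rw [hxsucc]; exact hg1 _ ih
  have hxr : ∀ n, r (x n) (x (n + 1)) := by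
    intro n; rw [hxsucc]; exact hg2 _ (hxC n)
  have hxρ : ∀ n, ρ (x n) ≤ 2 * min 1 ‖x (n + 1) - x n‖ := by
    intro n; rw [hxsucc]; exact hg3 _ (hxC n)
  have hmono : ∀ n m, n ≤ m → r (x n) (x m) := by
    intro n m hnm
    induction m, hnm using Nat.le_induction with
    | base => exact hrefl _
    | succ k hk ih => exact htrans _ _ _ ih (hxr k)
  obtain ⟨l, hl⟩ := hreg x hxr ⟨b, fun n => hb _ (hxC n)⟩
  have hlD : l ∈ D := hDcl.mem_of_tendsto hl (Eventually.of_forall fun n => hCD (hxC n))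
  have hxl : ∀ n, r (x n) l := by
    intro n
    exact hcl' (fun m => x (m + n)) (x n) l
      (fun m => hmono n (m + n) (Nat.le_add_left n m))
      (hl.comp (tendsto_add_atTop_nat n))
  have hdiff : Tendsto (fun n => ‖x (n + 1) - x n‖) atTop (nhds 0) := by
    have h1 : Tendsto (fun n => x (n + 1)) atTop (nhds l) :=
      hl.comp (tendsto_add_atTop_nat 1)
    have h2 : Tendsto (fun n => x (n + 1) - x n) atTop (nhds (l - l)) := h1.sub hl
    rw [sub_self] at h2
    simpa using h2.norm
  have hρlim : Tendsto (fun n => ρ (x n)) atTop (nhds 0) := by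
    have hupper : Tendsto (fun n => 2 * ‖x (n + 1) - x n‖) atTop (nhds 0) := by
      simpa using hdiff.const_mul 2
    refine squeeze_zero (fun n => hρ0 _ (hxC n)) (fun n => ?_) hupper
    exact (hxρ n).trans (by
      have := min_le_right (1:ℝ) ‖x (n + 1) - x n‖
      linarith)
  have hub : ∀ c ∈ C, r c l := by
    intro c hc
    by_cases hcase : ∃ n, r c (x n)
    · obtain ⟨n, hn⟩ := hcase
      exact htrans _ _ _ hn (hxl n)
    · push_neg at hcase
      have hxc : ∀ n, r (x n) c := by
        intro n
        rcases eq_or_ne (x n) c with h | h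
        · exact absurd (h ▸ hrefl c : r c (x n)) (hcase n)
        · rcases hchain (hxC n) hc h with h' | h'
          · exact h'
          · exact absurd h' (hcase n)
      have hmin : Tendsto (fun n => min 1 ‖c - x n‖) atTop (nhds 0) := by
        refine squeeze_zero (fun n => le_min zero_le_one (norm_nonneg _))
          (fun n => hmem_le (x n) c hc (hxc n)) hρlim
      have hnorm : Tendsto (fun n => ‖c - x n‖) atTop (nhds 0) := by
        have hev : ∀ᶠ n in atTop, min (1:ℝ) ‖c - x n‖ = ‖c - x n‖ := by
          filter_upwards [hmin.eventually (gt_mem_nhds (show (0:ℝ) < 1 from one_pos))]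
            with n hn
          have hlt : ‖c - x n‖ < 1 := by
            by_contra h'
            push_neg at h'
            rw [min_eq_left h'] at hn
            exact lt_irrefl _ hn
          exact min_eq_right hlt.le
        exact hmin.congr' hev
      have hxc' : Tendsto x atTop (nhds c) := by
        rw [tendsto_iff_norm_sub_tendsto_zero]
        simpa [norm_sub_rev] using hnorm
      have hceq : c = l := tendsto_nhds_unique hxc' hl
      exact hceq ▸ hrefl c
  exact ⟨l, hlD, hub, fun u hu => hcl x u l (fun n => hu _ (hxC n)) hl⟩

/-- Every nonempty norm-closed bi-inductive subset of a regular partially ordered Banach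
space is bi-chain-complete. -/
theorem biChainComplete_of_regular {X : Type*} [NormedAddCommGroup X] [NormedSpace ℝ X]
    [CompleteSpace X] [PartialOrder X]
    (hadd : ∀ x y z : X, x ≤ y → x + z ≤ y + z)
    (hsmul : ∀ α : ℝ, 0 ≤ α → ∀ x y : X, x ≤ y → α • x ≤ α • y)
    (hcone : IsClosed {x : X | 0 ≤ x})
    (hreg : ∀ x : ℕ → X, (∀ n, x n ≤ x (n + 1)) → (∃ b : X, ∀ n, x n ≤ b) →
      ∃ l : X, Filter.Tendsto x Filter.atTop (nhds l))
    (D : Set X) (hD : D.Nonempty) (hclosed : IsClosed D)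
    (hind : ∀ C : Set X, C ⊆ D → C.Nonempty → IsChain (· ≤ ·) C →
      (∃ b ∈ D, ∀ c ∈ C, c ≤ b) ∧ (∃ a ∈ D, ∀ c ∈ C, a ≤ c)) :
    ∀ C : Set X, C ⊆ D → C.Nonempty → IsChain (· ≤ ·) C →
      (∃ b ∈ D, IsLUB C b) ∧ (∃ a ∈ D, IsGLB C a) := by
  intro C hCD hCne hchain
  have hsub : ∀ x y : X, x ≤ y ↔ 0 ≤ y - x := by
    intro x y
    constructor
    · intro h
      have := hadd x y (-x) h
      simpa [sub_eq_add_neg] using this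
    · intro h
      have := hadd 0 (y - x) x h
      simpa using this
  have hcl : ∀ (f : ℕ → X) (y l : X), (∀ n, f n ≤ y) →
      Filter.Tendsto f Filter.atTop (nhds l) → l ≤ y := by
    intro f y l h ht
    rw [hsub]
    exact hcone.mem_of_tendsto (tendsto_const_nhds.sub ht)
      (Eventually.of_forall fun n => (hsub _ _).1 (h n))
  have hcl' : ∀ (f : ℕ → X) (y l : X), (∀ n, y ≤ f n) →
      Filter.Tendsto f Filter.atTop (nhds l) → y ≤ l := by
    intro f y l h ht
    rw [hsub]
    exact hcone.mem_of_tendsto (ht.sub tendsto_const_nhds)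
      (Eventually.of_forall fun n => (hsub _ _).1 (h n))
  have hneg : ∀ x y : X, x ≤ y → -y ≤ -x := by
    intro x y h
    rw [hsub] at h ⊢
    simpa [sub_eq_add_neg, add_comm] using h
  obtain ⟨⟨b, hbD, hbub⟩, ⟨a, haD, halb⟩⟩ := hind C hCD hCne hchain
  constructor
  · obtain ⟨l, hlD, h1, h2⟩ := exists_least_upper_bound_aux (· ≤ ·)
      le_refl (fun _ _ _ => le_trans) hcl hcl' hreg D hclosed C hCD hCne hchain b hbub
    exact ⟨l, hlD, ⟨fun c hc => h1 c hc, fun u hu => h2 u fun c hc => hu hc⟩⟩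
  · have hreg' : ∀ xs : ℕ → X, (∀ n, xs (n + 1) ≤ xs n) → (∃ b0, ∀ n, b0 ≤ xs n) →
        ∃ l, Filter.Tendsto xs Filter.atTop (nhds l) := by
      intro xs hdec ⟨b0, hb0⟩
      have hinc : ∀ n, xs 0 - xs n ≤ xs 0 - xs (n + 1) := by
        intro n
        have h1 := hneg _ _ (hdec n)
        have h2 := hadd _ _ (xs 0) h1
        simpa [sub_eq_add_neg, add_comm] using h2
      have hbdd : ∀ n, xs 0 - xs n ≤ xs 0 - b0 := by
        intro n
        have h1 := hneg _ _ (hb0 n)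
        have h2 := hadd _ _ (xs 0) h1
        simpa [sub_eq_add_neg, add_comm] using h2
      obtain ⟨l, hl⟩ := hreg (fun n => xs 0 - xs n) hinc ⟨xs 0 - b0, hbdd⟩
      refine ⟨xs 0 - l, ?_⟩
      have : Filter.Tendsto (fun n => xs 0 - (xs 0 - xs n)) Filter.atTop
          (nhds (xs 0 - l)) := tendsto_const_nhds.sub hl
      simpa using this
    obtain ⟨l, hlD, h1, h2⟩ := exists_least_upper_bound_aux (fun x y => y ≤ x)
      (fun x => le_refl x) (fun _ _ _ h1 h2 => le_trans h2 h1)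
      (fun f y l h ht => hcl' f y l h ht) (fun f y l h ht => hcl f y l h ht)
      hreg' D hclosed C hCD hCne hchain.symm a halb
    exact ⟨l, hlD, ⟨fun c hc => h1 c hc, fun u hu => h2 u fun c hc => hu hc⟩⟩
end

section
/- Let X be a real Banach space with a partial order ≼ that is translation invariant, invariant under multiplication by nonnegative scalars, has norm-closed positive cone, and is regular (every ≼-increasing sequence with a ≼-upper bound is norm-convergent). Then for any u, v ∈ X with u ≼ v, the order interval [u, v] = {z : u ≼ z ≼ v} is bi-chain-complete: every nonempty chain C ⊆ [u, v] has both a least ≼-upper bound and a greatest ≼-lower bound belonging to [u, v]. -/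
open Filter Set Topology

/-- Every sequence in a chain has a subsequence monotone with respect to the order. -/
private lemma chain_exists_monotone_subseq' {X : Type*} [PartialOrder X] {C : Set X}
    (hchain : IsChain (· ≤ ·) C) (f : ℕ → X) (hf : ∀ n, f n ∈ C) :
    ∃ φ : ℕ → ℕ, StrictMono φ ∧
      ((∀ n, f (φ n) ≤ f (φ (n + 1))) ∨ (∀ n, f (φ (n + 1)) ≤ f (φ n))) := by
  classical
  have hcomp : ∀ m n : ℕ, f m ≤ f n ∨ f n ≤ f m := by
    intro m n
    rcases eq_or_ne (f m) (f n) with h | h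
    · exact Or.inl h.le
    · exact hchain (hf m) (hf n) h
  by_cases hP : {n : ℕ | ∀ m, n < m → f m ≤ f n}.Infinite
  · refine ⟨Nat.nth (fun n => ∀ m, n < m → f m ≤ f n), Nat.nth_strictMono hP, Or.inr ?_⟩
    intro n
    have hmem := Nat.nth_mem_of_infinite hP n
    exact hmem _ ((Nat.nth_strictMono hP) (Nat.lt_succ_self n))
  · rw [Set.not_infinite] at hP
    obtain ⟨N, hN⟩ := hP.bddAbove
    have step : ∀ n : ℕ, N < n → ∃ m, n < m ∧ f n ≤ f m := by
      intro n hn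
      have hmem : n ∉ {n : ℕ | ∀ m, n < m → f m ≤ f n} := fun h => absurd (hN h) (not_le.mpr hn)
      simp only [Set.mem_setOf_eq, not_forall] at hmem
      obtain ⟨m, hm, hfm⟩ := hmem
      exact ⟨m, hm, (hcomp m n).resolve_left hfm⟩
    let g : ℕ → {n : ℕ // N < n} := fun k =>
      Nat.rec ⟨N + 1, Nat.lt_succ_self N⟩
        (fun _ p => ⟨(step p.1 p.2).choose, lt_trans p.2 (step p.1 p.2).choose_spec.1⟩) k
    refine ⟨fun k => (g k).1, strictMono_nat_of_lt_succ fun k => ?_, Or.inl fun k => ?_⟩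
    · exact (step (g k).1 (g k).2).choose_spec.1
    · exact (step (g k).1 (g k).2).choose_spec.2

/-- In a regular partially ordered Banach space, every order interval `[u, v]` is
bi-chain-complete. -/
theorem orderInterval_biChainComplete_of_regular {X : Type*} [NormedAddCommGroup X]
    [NormedSpace ℝ X] [CompleteSpace X] [PartialOrder X]
    (hadd : ∀ x y z : X, x ≤ y → x + z ≤ y + z)
    (hsmul : ∀ α : ℝ, 0 ≤ α → ∀ x y : X, x ≤ y → α • x ≤ α • y)
    (hcone : IsClosed {x : X | 0 ≤ x})
    (hreg : ∀ x : ℕ → X, (∀ n, x n ≤ x (n + 1)) → (∃ b : X, ∀ n, x n ≤ b) →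
      ∃ l : X, Filter.Tendsto x Filter.atTop (nhds l)) :
    ∀ u v : X, u ≤ v →
      ∀ C : Set X, C ⊆ Set.Icc u v → C.Nonempty → IsChain (· ≤ ·) C →
        (∃ b ∈ Set.Icc u v, IsLUB C b) ∧ (∃ a ∈ Set.Icc u v, IsGLB C a) := by
  classical
  -- the order relation is topologically closed
  have hle_sub : ∀ x y : X, x ≤ y ↔ (0 : X) ≤ y - x := by
    intro x y
    constructor
    · intro h; simpa [sub_eq_add_neg] using hadd x y (-x) h
    · intro h; simpa using hadd 0 (y - x) x h
  have hclosed_le : IsClosed {p : X × X | p.1 ≤ p.2} := by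
    have : {p : X × X | p.1 ≤ p.2} = (fun p : X × X => p.2 - p.1) ⁻¹' {x : X | 0 ≤ x} := by
      ext p; exact hle_sub p.1 p.2
    rw [this]
    exact hcone.preimage (continuous_snd.sub continuous_fst)
  have hclosed_ge : ∀ z : X, IsClosed {x : X | z ≤ x} := by
    intro z
    have : {x : X | z ≤ x} = (fun x : X => ((z, x) : X × X)) ⁻¹' {p : X × X | p.1 ≤ p.2} := rfl
    rw [this]
    exact hclosed_le.preimage (continuous_const.prodMk continuous_id)
  have hclosed_le' : ∀ z : X, IsClosed {x : X | x ≤ z} := by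
    intro z
    have : {x : X | x ≤ z} = (fun x : X => ((x, z) : X × X)) ⁻¹' {p : X × X | p.1 ≤ p.2} := rfl
    rw [this]
    exact hclosed_le.preimage (continuous_id.prodMk continuous_const)
  -- negation reverses the order
  have hneg : ∀ x y : X, x ≤ y → -y ≤ -x := by
    intro x y h
    have := hadd x y (-x - y) h
    have h1 : x + (-x - y) = -y := by abel
    have h2 : y + (-x - y) = -x := by abel
    rwa [h1, h2] at this
  intro u v huv C hC hCne hchain
  -- every sequence in C has a subsequence converging in X
  have key : ∀ f : ℕ → X, (∀ n, f n ∈ C) →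
      ∃ l ∈ closure C, ∃ φ : ℕ → ℕ, StrictMono φ ∧ Tendsto (f ∘ φ) atTop (𝓝 l) := by
    intro f hf
    obtain ⟨φ, hφ, hmono⟩ := chain_exists_monotone_subseq' hchain f hf
    rcases hmono with hinc | hdec
    · obtain ⟨l, hl⟩ := hreg (f ∘ φ) hinc ⟨v, fun n => (hC (hf (φ n))).2⟩
      exact ⟨l, mem_closure_of_tendsto hl (Eventually.of_forall fun n => hf (φ n)),
        φ, hφ, hl⟩
    · obtain ⟨l, hl⟩ := hreg (fun n => -(f (φ n)))
        (fun n => hneg _ _ (hdec n)) ⟨-u, fun n => hneg _ _ (hC (hf (φ n))).1⟩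
      have hl' : Tendsto (f ∘ φ) atTop (𝓝 (-l)) := by
        have := hl.neg
        simpa [Function.comp_def] using this
      exact ⟨-l, mem_closure_of_tendsto hl' (Eventually.of_forall fun n => hf (φ n)),
        φ, hφ, hl'⟩
  -- the closure of C is (sequentially, hence) compact
  have hseq : IsSeqCompact (closure C) := by
    intro f hf
    have hg : ∀ n : ℕ, ∃ g ∈ C, dist (f n) g < 1 / (n + 1 : ℝ) := by
      intro n
      exact Metric.mem_closure_iff.mp (hf n) _ (by positivity)
    choose g hgC hgd using hg
    obtain ⟨l, hlC, φ, hφ, hlim⟩ := key g hgC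
    refine ⟨l, hlC, φ, hφ, ?_⟩
    have hdist : Tendsto (fun n => dist ((g ∘ φ) n) ((f ∘ φ) n)) atTop (𝓝 0) := by
      apply squeeze_zero (fun n => dist_nonneg) (fun n => ?_)
        (tendsto_one_div_add_atTop_nhds_zero_nat)
      calc dist ((g ∘ φ) n) ((f ∘ φ) n) = dist (f (φ n)) (g (φ n)) := dist_comm _ _
        _ ≤ 1 / (φ n + 1 : ℝ) := (hgd (φ n)).le
        _ ≤ 1 / (n + 1 : ℝ) := by
            apply one_div_le_one_div_of_le (by positivity)
            have hn : n ≤ φ n := hφ.le_apply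
            exact add_le_add (Nat.cast_le.mpr hn) le_rfl
    exact hlim.congr_dist hdist
  have hKcomp : IsCompact (closure C) := hseq.isCompact
  have hKcl : IsClosed (closure C) := isClosed_closure
  have hKIcc : closure C ⊆ Set.Icc u v := by
    apply closure_minimal hC
    have : Set.Icc u v = {x : X | u ≤ x} ∩ {x : X | x ≤ v} := by
      ext x; simp [Set.mem_Icc, Set.mem_setOf_eq]
    rw [this]
    exact (hclosed_ge u).inter (hclosed_le' v)
  have hKne : (closure C).Nonempty := hCne.closure
  -- the closure of a chain is a chain
  have hKchain : ∀ x ∈ closure C, ∀ y ∈ closure C, x ≤ y ∨ y ≤ x := by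
    intro x hx y hy
    have hT : IsClosed {p : X × X | p.1 ≤ p.2 ∨ p.2 ≤ p.1} := by
      have : {p : X × X | p.1 ≤ p.2 ∨ p.2 ≤ p.1} =
          {p : X × X | p.1 ≤ p.2} ∪ (fun p : X × X => (p.2, p.1)) ⁻¹' {p : X × X | p.1 ≤ p.2} :=
        rfl
      rw [this]
      exact hclosed_le.union (hclosed_le.preimage (continuous_snd.prodMk continuous_fst))
    have hsub : C ×ˢ C ⊆ {p : X × X | p.1 ≤ p.2 ∨ p.2 ≤ p.1} := by
      rintro ⟨a, b⟩ ⟨ha, hb⟩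
      rcases eq_or_ne a b with h | h
      · exact Or.inl h.le
      · exact hchain ha hb h
    have : (x, y) ∈ closure (C ×ˢ C) := by
      rw [closure_prod_eq]
      exact ⟨hx, hy⟩
    exact closure_minimal hsub hT this
  -- a compact chain has a greatest element
  have hmax : ∃ b ∈ closure C, ∀ x ∈ closure C, x ≤ b := by
    haveI : Nonempty (closure C) := hKne.to_subtype
    have := IsCompact.nonempty_iInter_of_directed_nonempty_isCompact_isClosed
      (fun x : closure C => closure C ∩ {y : X | (x : X) ≤ y})
      (fun x₁ x₂ => by
        rcases hKchain x₁ x₁.2 x₂ x₂.2 with h | h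
        · exact ⟨x₂, fun y hy => ⟨hy.1, le_trans h hy.2⟩, fun y hy => hy⟩
        · exact ⟨x₁, fun y hy => hy, fun y hy => ⟨hy.1, le_trans h hy.2⟩⟩)
      (fun x => ⟨x, x.2, le_refl _⟩)
      (fun x => hKcomp.inter_right (hclosed_ge x))
      (fun x => hKcl.inter (hclosed_ge x))
    obtain ⟨b, hb⟩ := this
    simp only [Set.mem_iInter, Set.mem_inter_iff, Set.mem_setOf_eq] at hb
    exact ⟨b, (hb ⟨hKne.some, hKne.some_mem⟩).1, fun x hx => (hb ⟨x, hx⟩).2⟩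
  have hmin : ∃ a ∈ closure C, ∀ x ∈ closure C, a ≤ x := by
    haveI : Nonempty (closure C) := hKne.to_subtype
    have := IsCompact.nonempty_iInter_of_directed_nonempty_isCompact_isClosed
      (fun x : closure C => closure C ∩ {y : X | y ≤ (x : X)})
      (fun x₁ x₂ => by
        rcases hKchain x₁ x₁.2 x₂ x₂.2 with h | h
        · exact ⟨x₁, fun y hy => hy, fun y hy => ⟨hy.1, le_trans hy.2 h⟩⟩
        · exact ⟨x₂, fun y hy => ⟨hy.1, le_trans hy.2 h⟩, fun y hy => hy⟩)
      (fun x => ⟨x, x.2, le_refl _⟩)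
      (fun x => hKcomp.inter_right (hclosed_le' x))
      (fun x => hKcl.inter (hclosed_le' x))
    obtain ⟨a, ha⟩ := this
    simp only [Set.mem_iInter, Set.mem_inter_iff, Set.mem_setOf_eq] at ha
    exact ⟨a, (ha ⟨hKne.some, hKne.some_mem⟩).1, fun x hx => (ha ⟨x, hx⟩).2⟩
  obtain ⟨b, hbK, hbmax⟩ := hmax
  obtain ⟨a, haK, hamin⟩ := hmin
  constructor
  · refine ⟨b, hKIcc hbK, fun c hc => hbmax c (subset_closure hc), fun z hz => ?_⟩
    have : closure C ⊆ {x : X | x ≤ z} := closure_minimal (fun c hc => hz hc) (hclosed_le' z)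
    exact this hbK
  · refine ⟨a, hKIcc haK, fun c hc => hamin c (subset_closure hc), fun z hz => ?_⟩
    have : closure C ⊆ {x : X | z ≤ x} := closure_minimal (fun c hc => hz hc) (hclosed_ge z)
    exact this haK
end

section
/- Let X be a reflexive Banach lattice, i.e. a real Banach space which is a lattice under a partial order compatible with the vector space structure, such that |x| ≤ |y| implies ‖x‖ ≤ ‖y‖, and such that the canonical embedding of X into its double dual is surjective. Then X is bi-chain-complete: for all u ≼ v in X, every nonempty chain C ⊆ [u, v] = {z : u ≼ z ≼ v} has both a least ≼-upper bound and a greatest ≼-lower bound belonging to [u, v]. -/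
open Filter Topology Set NormedSpace

section Aux

variable {X : Type*} [NormedAddCommGroup X] [Lattice X] [IsOrderedAddMonoid X] [HasSolidNorm X]
  [NormedSpace ℝ X]

/-- A positive functional is monotone. -/
lemma rbl_mono {f : X →L[ℝ] ℝ} (hf : ∀ z : X, 0 ≤ z → 0 ≤ f z) {x y : X} (h : x ≤ y) :
    f x ≤ f y := by
  have := hf (y - x) (sub_nonneg.2 h)
  rw [map_sub] at this
  exact sub_nonneg.1 this

/-- Dual characterization of the order via positive functionals. -/
lemma rbl_le_of_pos_dual (hsmul : ∀ α : ℝ, 0 ≤ α → ∀ x : X, 0 ≤ x → 0 ≤ α • x)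
    {x y : X} (h : ∀ f : X →L[ℝ] ℝ, (∀ z : X, 0 ≤ z → 0 ≤ f z) → f x ≤ f y) : x ≤ y := by
  rw [← sub_nonneg]
  by_contra hzK
  have hconv : Convex ℝ {w : X | 0 ≤ w} := by
    intro a ha b hb s t hs ht _
    exact add_nonneg (hsmul s hs a ha) (hsmul t ht b hb)
  obtain ⟨f, u, hfK, hfz⟩ :=
    geometric_hahn_banach_closed_point hconv isClosed_nonneg hzK
  clear hzK
  have hu0 : (0 : ℝ) < u := by simpa using hfK 0 le_rfl
  have hgpos : ∀ w : X, 0 ≤ w → 0 ≤ (-f) w := by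
    intro w hw
    simp only [ContinuousLinearMap.neg_apply, neg_nonneg]
    by_contra hfw
    push_neg at hfw
    have ht : (0:ℝ) ≤ u / f w := le_of_lt (div_pos hu0 hfw)
    have := hfK ((u / f w) • w) (hsmul _ ht w hw)
    rw [map_smul] at this
    simp only [smul_eq_mul] at this
    rw [div_mul_cancel₀ _ (ne_of_gt hfw)] at this
    exact lt_irrefl _ this
  have hle := h (-f) hgpos
  simp only [ContinuousLinearMap.neg_apply, neg_le_neg_iff] at hle
  have : f (y - x) ≤ 0 := by rw [map_sub]; exact sub_nonpos.2 hle
  exact absurd hfz (not_lt.2 (this.trans hu0.le))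

lemma rbl_chain_lub [CompleteSpace X]
    (hsmul : ∀ α : ℝ, 0 ≤ α → ∀ x : X, 0 ≤ x → 0 ≤ α • x)
    (hrefl : Function.Surjective (NormedSpace.inclusionInDoubleDual ℝ X))
    {u v : X} (huv : u ≤ v) {C : Set X} (hC : C ⊆ Set.Icc u v) (hne : C.Nonempty)
    (hch : IsChain (· ≤ ·) C) : ∃ b ∈ Set.Icc u v, IsLUB C b := by
  haveI : Nonempty C := hne.to_subtype
  haveI : IsDirected C (· ≤ ·) := by
    constructor
    intro a b
    rcases eq_or_ne (a : X) b with hab | hab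
    · exact ⟨b, hab.le, le_rfl⟩
    · rcases hch a.2 b.2 hab with h | h
      · exact ⟨b, h, le_rfl⟩
      · exact ⟨a, le_rfl, h⟩
  set J := NormedSpace.inclusionInDoubleDual ℝ X with hJ
  set R : ℝ := ‖|u| ⊔ |v|‖ with hR
  have hnorm : ∀ c ∈ C, ‖c‖ ≤ R := by
    intro c hc
    apply norm_le_norm_of_abs_le_abs
    rw [abs_of_nonneg (le_trans (abs_nonneg u) le_sup_left)]
    rw [abs_le']
    constructor
    · exact le_trans (hC hc).2 (le_trans (le_abs_self v) le_sup_right)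
    · exact le_trans (neg_le_neg (hC hc).1) (le_trans (neg_le_abs u) le_sup_left)
  set g : C → WeakDual ℝ (StrongDual ℝ X) := fun c => StrongDual.toWeakDual (J c) with hg
  have hmaps : Filter.map g Filter.atTop ≤
      Filter.principal (WeakDual.toStrongDual ⁻¹' Metric.closedBall (0 : StrongDual ℝ (StrongDual ℝ X)) R) := by
    rw [Filter.le_principal_iff, Filter.mem_map]
    apply Filter.univ_mem'
    intro c
    simp only [Set.mem_preimage, Metric.mem_closedBall, dist_zero_right]
    calc dist (WeakDual.toStrongDual (g c)) 0 = ‖WeakDual.toStrongDual (g c)‖ :=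
        (dist_zero_right (WeakDual.toStrongDual (g c)) :)
      _ = ‖J (c : X)‖ := rfl
      _ ≤ ‖(c : X)‖ := NormedSpace.double_dual_bound ℝ X _
      _ ≤ R := hnorm c c.2
  haveI : (Filter.map g Filter.atTop).NeBot := Filter.map_neBot
  obtain ⟨φ, _, hφ⟩ := (WeakDual.isCompact_closedBall (0 : StrongDual ℝ (StrongDual ℝ X)) R) hmaps
  obtain ⟨b, hb⟩ := hrefl (WeakDual.toStrongDual φ)
  -- pointwise cluster points
  have hcl : ∀ f : StrongDual ℝ X, ClusterPt (f b) (Filter.map (fun c : C => f c) Filter.atTop) := by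
    intro f
    have hc : ContinuousAt (fun ψ : WeakDual ℝ (StrongDual ℝ X) => ψ f) φ :=
      (WeakDual.eval_continuous f).continuousAt
    have ht : Filter.Tendsto (fun ψ : WeakDual ℝ (StrongDual ℝ X) => ψ f)
        (Filter.map g Filter.atTop) (Filter.map (fun c : C => f c) Filter.atTop) := by
      rw [Filter.tendsto_map'_iff]
      exact Filter.tendsto_map
    have := hφ.map hc ht
    have hφf : φ f = f b := by
      have : WeakDual.toStrongDual φ f = f b := by rw [← hb]; rfl
      exact this
    rwa [hφf] at this
  have key : ∀ f : StrongDual ℝ X, ∀ s : Set ℝ, IsClosed s → (∀ c ∈ C, f c ∈ s) → f b ∈ s := by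
    intro f s hs hmem
    have hsmem : s ∈ Filter.map (fun c : C => f c) Filter.atTop := by
      rw [Filter.mem_map]
      exact Filter.univ_mem' (fun c => hmem c c.2)
    have := (hcl f).mono (Filter.le_principal_iff.2 hsmem)
    exact hs.closure_subset (mem_closure_iff_clusterPt.2 this)
  -- b is an upper bound
  have hub : ∀ c ∈ C, c ≤ b := by
    intro c hc
    apply rbl_le_of_pos_dual hsmul
    intro f hf
    -- cluster point of eventually ≥ f c net
    have hsmem : Set.Ici (f c) ∈ Filter.map (fun x : C => f x) Filter.atTop := by
      rw [Filter.mem_map]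
      refine Filter.mem_of_superset (Filter.Ici_mem_atTop (⟨c, hc⟩ : C)) ?_
      intro x hx
      exact rbl_mono hf hx
    have := (hcl f).mono (Filter.le_principal_iff.2 hsmem)
    exact isClosed_Ici.closure_subset (mem_closure_iff_clusterPt.2 this)
  -- b is least
  have hleast : ∀ w, w ∈ upperBounds C → b ≤ w := by
    intro w hw
    apply rbl_le_of_pos_dual hsmul
    intro f hf
    exact key f (Set.Iic (f w)) isClosed_Iic (fun c hc => rbl_mono hf (hw hc))
  obtain ⟨c0, hc0⟩ := hne
  refine ⟨b, ⟨le_trans (hC hc0).1 (hub c0 hc0), hleast v (fun c hc => (hC hc).2)⟩, hub, hleast⟩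

end Aux

/-- Every reflexive Banach lattice is bi-chain-complete: every nonempty chain in an order
interval `[u, v]` has a least upper bound and a greatest lower bound in `[u, v]`. -/
theorem reflexiveBanachLattice_biChainComplete {X : Type*} [NormedAddCommGroup X] [Lattice X]
    [IsOrderedAddMonoid X] [HasSolidNorm X]
    [NormedSpace ℝ X] [CompleteSpace X]
    (hsmul : ∀ α : ℝ, 0 ≤ α → ∀ x : X, 0 ≤ x → 0 ≤ α • x)
    (hrefl : Function.Surjective (NormedSpace.inclusionInDoubleDual ℝ X)) :
    ∀ u v : X, u ≤ v →
      ∀ C : Set X, C ⊆ Set.Icc u v → C.Nonempty → IsChain (· ≤ ·) C →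
        (∃ b ∈ Set.Icc u v, IsLUB C b) ∧ (∃ a ∈ Set.Icc u v, IsGLB C a) := by
  intro u v huv C hC hne hch
  constructor
  · exact rbl_chain_lub hsmul hrefl huv hC hne hch
  · -- apply the LUB result to the negated chain
    have hC' : (Neg.neg '' C : Set X) ⊆ Set.Icc (-v) (-u) := by
      rintro _ ⟨c, hc, rfl⟩
      exact ⟨neg_le_neg (hC hc).2, neg_le_neg (hC hc).1⟩
    have hne' : (Neg.neg '' C : Set X).Nonempty := hne.image _
    have hch' : IsChain (· ≤ ·) (Neg.neg '' C : Set X) := by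
      rintro _ ⟨c, hc, rfl⟩ _ ⟨d, hd, rfl⟩ hne2
      have hcd : c ≠ d := fun h => hne2 (by rw [h])
      rcases hch hc hd hcd with h | h
      · exact Or.inr (neg_le_neg h)
      · exact Or.inl (neg_le_neg h)
    obtain ⟨b, hbmem, hblub⟩ :=
      rbl_chain_lub hsmul hrefl (neg_le_neg huv) hC' hne' hch'
    refine ⟨-b, ⟨le_neg.1 hbmem.2, neg_le.1 hbmem.1⟩, ?_, ?_⟩
    · intro c hc
      have := hblub.1 (Set.mem_image_of_mem _ hc)
      exact neg_le.1 (by simpa using this)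
    · intro w hw
      have : -w ∈ upperBounds (Neg.neg '' C : Set X) := by
        rintro _ ⟨c, hc, rfl⟩
        exact neg_le_neg (hw hc)
      have := hblub.2 this
      exact le_neg.2 this
end

section
/- Let (X, ≼) be a chain-complete poset (every nonempty chain in X has a least ≼-upper bound in X) and let A ⊆ X be a nonempty inductive subset possessing only finitely many ≼-maximal elements. Then A is universally inductive in X: every nonempty chain C ⊆ X such that every element of C has a ≼-upper bound in A admits a ≼-upper bound in A. -/
/-- In a chain-complete poset, every nonempty inductive subset with finitely many
maximal elements is universally inductive. -/
theorem universallyInductive_of_finitely_many_maximal {X : Type*} [PartialOrder X]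
    (hcc : ∀ C : Set X, C.Nonempty → IsChain (· ≤ ·) C → ∃ b : X, IsLUB C b)
    (A : Set X) (hA : A.Nonempty)
    (hind : ∀ C : Set X, C ⊆ A → C.Nonempty → IsChain (· ≤ ·) C →
      ∃ b ∈ A, ∀ c ∈ C, c ≤ b)
    (hfin : {a : X | a ∈ A ∧ ∀ b ∈ A, a ≤ b → b = a}.Finite) :
    ∀ C : Set X, C.Nonempty → IsChain (· ≤ ·) C → (∀ c ∈ C, ∃ a ∈ A, c ≤ a) →
      ∃ a ∈ A, ∀ c ∈ C, c ≤ a := by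
  intro C hCne hCchain hCub
  set S : Set X := {a : X | a ∈ A ∧ ∀ b ∈ A, a ≤ b → b = a} with hS
  -- every element of A lies below a maximal element of A
  have key : ∀ a ∈ A, ∃ m ∈ S, a ≤ m := by
    intro a ha
    obtain ⟨m, ham, hm⟩ := zorn_le_nonempty₀ A
      (fun c hc hchain y hy => hind c hc ⟨y, hy⟩ hchain) a ha
    exact ⟨m, ⟨hm.1, fun b hb hmb => le_antisymm (hm.2 hb hmb) hmb⟩, ham⟩
  -- M c : maximal elements above c
  set M : X → Set X := fun c => {m | m ∈ S ∧ c ≤ m} with hM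
  have hMfin : ∀ c, (M c).Finite := fun c => hfin.subset (fun m hm => hm.1)
  have hMne : ∀ c ∈ C, (M c).Nonempty := by
    intro c hc
    obtain ⟨a, ha, hca⟩ := hCub c hc
    obtain ⟨m, hmS, ham⟩ := key a ha
    exact ⟨m, hmS, hca.trans ham⟩
  -- pick c₀ with minimal ncard of M c₀
  obtain ⟨c₀, hc₀⟩ := hCne
  obtain ⟨n, ⟨c₁, hc₁, hn⟩, hmin⟩ :=
    Nat.lt_wfRel.wf.has_min {n | ∃ c ∈ C, (M c).ncard = n} ⟨(M c₀).ncard, c₀, hc₀, rfl⟩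
  have hsub : ∀ c ∈ C, M c₁ ⊆ M c := by
    intro c hc
    rcases hCchain.total hc₁ hc with h | h
    · -- c₁ ≤ c : M c ⊆ M c₁ and by minimality they are equal
      have hsub' : M c ⊆ M c₁ := fun m hm => ⟨hm.1, h.trans hm.2⟩
      have : (M c).ncard = (M c₁).ncard := by
        have hle : (M c).ncard ≤ (M c₁).ncard := Set.ncard_le_ncard hsub' (hMfin c₁)
        rw [hn]
        by_contra hne
        exact hmin _ ⟨c, hc, rfl⟩ (lt_of_le_of_ne (hn ▸ hle) hne)
      rw [Set.eq_of_subset_of_ncard_le hsub' this.ge (hMfin c₁)]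
    · exact fun m hm => ⟨hm.1, h.trans hm.2⟩
  obtain ⟨m, hmS, _⟩ := hMne c₁ hc₁
  exact ⟨m, hmS.1, fun c hc => (hsub c hc ⟨hmS, ‹c₁ ≤ m›⟩).2⟩
end

section
/- Let X be a Hausdorff topological space with a partial order ≼ such that all intervals [u) = {x : u ≼ x} and (u] = {x : x ≼ u} are closed. Then every nonempty compact subset A of X is universally inductive in X: every nonempty chain C ⊆ X such that every element of C has a ≼-upper bound in A admits a ≼-upper bound in A. -/
/-- Every nonempty compact subset of a partially ordered Hausdorff topological space
(with closed order intervals) is universally inductive. -/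
theorem universallyInductive_of_compact {X : Type*} [TopologicalSpace X] [T2Space X]
    [PartialOrder X]
    (hnat : ∀ u : X, IsClosed {x : X | u ≤ x} ∧ IsClosed {x : X | x ≤ u})
    (A : Set X) (hA : A.Nonempty) (hcomp : IsCompact A) :
    ∀ C : Set X, C.Nonempty → IsChain (· ≤ ·) C → (∀ c ∈ C, ∃ a ∈ A, c ≤ a) →
      ∃ a ∈ A, ∀ c ∈ C, c ≤ a := by
  intro C hCne hchain hub
  haveI : Nonempty C := hCne.to_subtype
  set K : C → Set X := fun c => A ∩ {x | (c : X) ≤ x} with hK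
  have hKclosed : ∀ c, IsClosed (K c) := fun c =>
    (hcomp.isClosed).inter (hnat c).1
  have hKcomp : ∀ c, IsCompact (K c) := fun c =>
    hcomp.inter_right (hnat c).1
  have hKne : ∀ c, (K c).Nonempty := by
    rintro ⟨c, hc⟩
    obtain ⟨a, ha, hca⟩ := hub c hc
    exact ⟨a, ha, hca⟩
  have hdir : Directed (· ⊇ ·) K := by
    rintro ⟨c, hc⟩ ⟨d, hd⟩
    rcases eq_or_ne c d with rfl | hne
    · exact ⟨⟨c, hc⟩, le_refl _, le_refl _⟩
    rcases hchain hc hd hne with h | h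
    · exact ⟨⟨d, hd⟩, fun x hx => ⟨hx.1, h.trans hx.2⟩, fun x hx => hx⟩
    · exact ⟨⟨c, hc⟩, fun x hx => hx, fun x hx => ⟨hx.1, h.trans hx.2⟩⟩
  obtain ⟨a, ha⟩ := IsCompact.nonempty_iInter_of_directed_nonempty_isCompact_isClosed
    K hdir hKne hKcomp hKclosed
  simp only [Set.mem_iInter] at ha
  exact ⟨a, (ha ⟨hCne.some, hCne.some_mem⟩).1, fun c hc => (ha ⟨c, hc⟩).2⟩
end

section
/- Let X be a real Banach space with a partial order ≼ that is translation invariant, invariant under multiplication by nonnegative scalars, has norm-closed positive cone, and is regular (every ≼-increasing sequence with a ≼-upper bound is norm-convergent). Let D ⊆ X be a nonempty norm-closed inductive subset, and let T : D → 2^D \ {∅} be a set-valued mapping such that: (1) T is order-increasing upward (x ≼ y in D implies for every z ∈ Tx there is w ∈ Ty with z ≼ w); (2) for every x ∈ D the set Tx is universally inductive in D; (3) there exist x₀ ∈ D and x₁ ∈ Tx₀ with x₀ ≼ x₁. Then the fixed point set F(T) = {x ∈ D : x ∈ Tx} is a nonempty inductive subset of D, and F(T) ∩ [x₀) = {x ∈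 F(T) : x₀ ≼ x} is also a nonempty inductive subset of D. -/
open Filter Topology

/-- limits preserve order given a closed positive cone (eventual version). -/
lemma aux_le_of_tendsto {X : Type*} [NormedAddCommGroup X] [PartialOrder X]
    (hcone : IsClosed {x : X | 0 ≤ x})
    (hsub : ∀ x y : X, x ≤ y ↔ 0 ≤ y - x)
    {g : ℕ → X} {l x : X} (hg : Tendsto g atTop (nhds l))
    (h : ∀ᶠ n in atTop, x ≤ g n) : x ≤ l := by
  have : Tendsto (fun n => g n - x) atTop (nhds (l - x)) := hg.sub tendsto_const_nhds
  have hm : l - x ∈ {x : X | 0 ≤ x} :=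
    hcone.mem_of_tendsto this (h.mono fun n hn => (hsub x (g n)).1 hn)
  exact (hsub x l).2 hm

lemma aux_ge_of_tendsto {X : Type*} [NormedAddCommGroup X] [PartialOrder X]
    (hcone : IsClosed {x : X | 0 ≤ x})
    (hsub : ∀ x y : X, x ≤ y ↔ 0 ≤ y - x)
    {g : ℕ → X} {l x : X} (hg : Tendsto g atTop (nhds l))
    (h : ∀ᶠ n in atTop, g n ≤ x) : l ≤ x := by
  have : Tendsto (fun n => x - g n) atTop (nhds (x - l)) := tendsto_const_nhds.sub hg
  have hm : x - l ∈ {x : X | 0 ≤ x} :=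
    hcone.mem_of_tendsto this (h.mono fun n hn => (hsub (g n) x).1 hn)
  exact (hsub l x).2 hm

/-- A nonempty chain bounded above has a "supremum" in its closure. -/
lemma aux_chainSup {X : Type*} [NormedAddCommGroup X] [PartialOrder X]
    (hcone : IsClosed {x : X | 0 ≤ x})
    (hsub : ∀ x y : X, x ≤ y ↔ 0 ≤ y - x)
    (hreg : ∀ x : ℕ → X, (∀ n, x n ≤ x (n + 1)) → (∃ b : X, ∀ n, x n ≤ b) →
      ∃ l : X, Filter.Tendsto x Filter.atTop (nhds l))
    (C : Set X) (hne : C.Nonempty) (hchain : IsChain (· ≤ ·) C)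
    (b : X) (hb : ∀ c ∈ C, c ≤ b) :
    ∃ u ∈ closure C, (∀ c ∈ C, c ≤ u) ∧ ∀ a, (∀ c ∈ C, c ≤ a) → u ≤ a := by
  classical
  -- key step: near-maximal increase
  have key : ∀ (k : ℕ) (u : X), u ∈ C → ∃ v, v ∈ C ∧ u ≤ v ∧
      ∀ c ∈ C, ¬ c ≤ u → min ‖c - u‖ 1 ≤ min ‖v - u‖ 1 + 1 / (k + 1 : ℝ) := by
    intro k u hu
    by_cases hS : ∃ c ∈ C, ¬ c ≤ u
    · set A : Set ℝ := (fun c => min ‖c - u‖ 1) '' {c ∈ C | ¬ c ≤ u} with hA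
      have hAne : A.Nonempty := by
        obtain ⟨c, hc, hcu⟩ := hS
        exact ⟨_, ⟨c, ⟨hc, hcu⟩, rfl⟩⟩
      have hAbdd : BddAbove A := by
        refine ⟨1, ?_⟩
        rintro x ⟨c, _, rfl⟩
        exact min_le_right _ _
      have hε : (0 : ℝ) < 1 / (k + 1 : ℝ) := by positivity
      have hlt : sSup A - 1 / (k + 1 : ℝ) < sSup A := sub_lt_self _ hε
      obtain ⟨x, hxA, hx⟩ := exists_lt_of_lt_csSup hAne hlt
      obtain ⟨v, ⟨hvC, hvu⟩, rfl⟩ := hxA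
      refine ⟨v, hvC, ?_, ?_⟩
      · rcases eq_or_ne v u with rfl | hne'
        · exact le_rfl
        · rcases hchain hvC hu hne' with h | h
          · exact absurd h hvu
          · exact h
      · intro c hc hcu
        have h1 : min ‖c - u‖ 1 ≤ sSup A := le_csSup hAbdd ⟨c, ⟨hc, hcu⟩, rfl⟩
        exact h1.trans (le_of_lt (sub_lt_iff_lt_add.mp hx))
    · push_neg at hS
      exact ⟨u, hu, le_rfl, fun c hc hcu => absurd (hS c hc) (by exact fun h => hcu h)⟩
  choose next hnextC hnextLe hnextApprox using key
  obtain ⟨c₀, hc₀⟩ := hne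
  let f : ℕ → {v : X // v ∈ C} := fun k =>
    Nat.rec ⟨c₀, hc₀⟩ (fun k p => ⟨next k p.1 p.2, hnextC k p.1 p.2⟩) k
  have hfsucc : ∀ k, (f (k + 1)).1 = next k (f k).1 (f k).2 := fun k => rfl
  have hfle : ∀ k, (f k).1 ≤ (f (k + 1)).1 := fun k => by
    rw [hfsucc]; exact hnextLe k (f k).1 (f k).2
  have hfmono : Monotone fun k => (f k).1 :=
    monotone_nat_of_le_succ hfle
  obtain ⟨u, hu⟩ := hreg (fun k => (f k).1) hfle ⟨b, fun k => hb _ (f k).2⟩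
  have huC : u ∈ closure C := mem_closure_of_tendsto hu (by
    filter_upwards with k; exact (f k).2)
  have hfleu : ∀ k, (f k).1 ≤ u := by
    intro k
    refine aux_le_of_tendsto hcone hsub hu ?_
    filter_upwards [eventually_ge_atTop k] with m hm
    exact hfmono hm
  have hub : ∀ c ∈ C, c ≤ u := by
    intro c hc
    by_contra hcu
    have hcuk : ∀ k, ¬ c ≤ (f k).1 := fun k h => hcu (h.trans (hfleu k))
    -- the approximation inequality
    have hineq : ∀ k, min ‖c - (f k).1‖ 1 ≤ ‖(f (k + 1)).1 - (f k).1‖ + 1 / (k + 1 : ℝ) := by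
      intro k
      have := hnextApprox k (f k).1 (f k).2 c hc (hcuk k)
      rw [← hfsucc] at this
      exact this.trans (by gcongr; exact min_le_left _ _)
    have hlim1 : Tendsto (fun k => ‖(f (k + 1)).1 - (f k).1‖ + 1 / (k + 1 : ℝ)) atTop (nhds 0) := by
      have h1 : Tendsto (fun k => (f (k + 1)).1 - (f k).1) atTop (nhds 0) := by
        have := (hu.comp (tendsto_add_atTop_nat 1)).sub hu
        simpa using this
      have h2 : Tendsto (fun k : ℕ => 1 / (k + 1 : ℝ)) atTop (nhds 0) :=
        tendsto_one_div_add_atTop_nhds_zero_nat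
      simpa using (h1.norm).add h2
    have hlim2 : Tendsto (fun k => min ‖c - (f k).1‖ 1) atTop (nhds (min ‖c - u‖ 1)) := by
      have : Tendsto (fun k => ‖c - (f k).1‖) atTop (nhds ‖c - u‖) :=
        ((tendsto_const_nhds.sub hu).norm)
      exact this.min tendsto_const_nhds
    have hle0 : min ‖c - u‖ 1 ≤ 0 := le_of_tendsto_of_tendsto' hlim2 hlim1 hineq
    have h0le : (0:ℝ) ≤ min ‖c - u‖ 1 := le_min (norm_nonneg _) zero_le_one
    have : ‖c - u‖ = 0 := by
      rcases min_cases ‖c - u‖ 1 with ⟨h, _⟩ | ⟨h, _⟩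
      · exact le_antisymm (h ▸ hle0) (norm_nonneg _)
      · exact absurd (h ▸ hle0) (by norm_num)
    have : c = u := by
      have := norm_eq_zero.mp this
      exact sub_eq_zero.mp this
    exact hcu (this ▸ le_rfl)
  refine ⟨u, huC, hub, fun a ha => ?_⟩
  exact aux_ge_of_tendsto hcone hsub hu (by filter_upwards with k; exact ha _ (f k).2)

/-- Zorn core: from any point of D with a bigger image point, there is a fixed point above it. -/
lemma aux_zornCore {X : Type*} [NormedAddCommGroup X] [PartialOrder X]
    (hcone : IsClosed {x : X | 0 ≤ x})
    (hsub : ∀ x y : X, x ≤ y ↔ 0 ≤ y - x)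
    (hreg : ∀ x : ℕ → X, (∀ n, x n ≤ x (n + 1)) → (∃ b : X, ∀ n, x n ≤ b) →
      ∃ l : X, Filter.Tendsto x Filter.atTop (nhds l))
    (D : Set X) (hclosed : IsClosed D)
    (hind : ∀ C : Set X, C ⊆ D → C.Nonempty → IsChain (· ≤ ·) C →
      ∃ b ∈ D, ∀ c ∈ C, c ≤ b)
    (T : X → Set X)
    (hTD : ∀ x ∈ D, T x ⊆ D)
    (hmono : ∀ x ∈ D, ∀ y ∈ D, x ≤ y → ∀ z ∈ T x, ∃ w ∈ T y, z ≤ w)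
    (huniv : ∀ x ∈ D, ∀ C : Set X, C ⊆ D → C.Nonempty → IsChain (· ≤ ·) C →
      (∀ c ∈ C, ∃ a ∈ T x, c ≤ a) → ∃ a ∈ T x, ∀ c ∈ C, c ≤ a)
    (s : X) (hs : s ∈ D) (hsy : ∃ y ∈ T s, s ≤ y) :
    ∃ m ∈ D, m ∈ T m ∧ s ≤ m := by
  set E : Set X := {x | x ∈ D ∧ s ≤ x ∧ ∃ y ∈ T x, x ≤ y} with hE
  have hsE : s ∈ E := ⟨hs, le_rfl, hsy⟩
  have hch : ∀ c ⊆ E, IsChain (· ≤ ·) c → ∀ y ∈ c, ∃ ub ∈ E, ∀ z ∈ c, z ≤ ub := by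
    intro C hCE hCchain y₀ hy₀
    have hCne : C.Nonempty := ⟨y₀, hy₀⟩
    have hCD : C ⊆ D := fun c hc => (hCE hc).1
    obtain ⟨b, hbD, hbub⟩ := hind C hCD hCne hCchain
    obtain ⟨u, huC, huub, hulub⟩ := aux_chainSup hcone hsub hreg C hCne hCchain b hbub
    have huD : u ∈ D := hclosed.closure_subset_iff.mpr hCD huC
    -- every element of C has an upper bound in T u
    have hbdd : ∀ c ∈ C, ∃ a ∈ T u, c ≤ a := by
      intro c hc
      obtain ⟨y, hyT, hcy⟩ := (hCE hc).2.2
      obtain ⟨w, hwT, hyw⟩ := hmono c (hCD hc) u huD (huub c hc) y hyT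
      exact ⟨w, hwT, hcy.trans hyw⟩
    obtain ⟨a, haT, haub⟩ := huniv u huD C hCD hCne hCchain hbdd
    have haD : a ∈ D := hTD u huD haT
    have hua : u ≤ a := hulub a haub
    obtain ⟨w, hwT, haw⟩ := hmono u huD a haD hua a haT
    refine ⟨a, ⟨haD, ?_, ⟨w, hwT, haw⟩⟩, haub⟩
    exact ((hCE hy₀).2.1).trans (haub y₀ hy₀)
  obtain ⟨m, hsm, hmE, hmmax⟩ := zorn_le_nonempty₀ E hch s hsE
  obtain ⟨hmD, hsm', y, hyT, hmy⟩ := hmE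
  have hyD : y ∈ D := hTD m hmD hyT
  obtain ⟨w, hwT, hyw⟩ := hmono m hmD y hyD hmy y hyT
  have hyE : y ∈ E := ⟨hyD, hsm'.trans hmy, ⟨w, hwT, hyw⟩⟩
  have : y = m := le_antisymm (hmmax hyE hmy) hmy
  exact ⟨m, hmD, this ▸ hyT, hsm⟩

/-- Fixed point theorem for isotone set-valued maps with universally inductive values on a
closed inductive subset of a regular partially ordered Banach space: the fixed point set
`F(T)` and `F(T) ∩ [x₀)` are nonempty inductive posets. -/
theorem fixedPoints_nonempty_inductive_setValued {X : Type*} [NormedAddCommGroup X]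
    [NormedSpace ℝ X] [CompleteSpace X] [PartialOrder X]
    (hadd : ∀ x y z : X, x ≤ y → x + z ≤ y + z)
    (hsmul : ∀ α : ℝ, 0 ≤ α → ∀ x y : X, x ≤ y → α • x ≤ α • y)
    (hcone : IsClosed {x : X | 0 ≤ x})
    (hreg : ∀ x : ℕ → X, (∀ n, x n ≤ x (n + 1)) → (∃ b : X, ∀ n, x n ≤ b) →
      ∃ l : X, Filter.Tendsto x Filter.atTop (nhds l))
    (D : Set X) (hD : D.Nonempty) (hclosed : IsClosed D)
    (hind : ∀ C : Set X, C ⊆ D → C.Nonempty → IsChain (· ≤ ·) C →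
      ∃ b ∈ D, ∀ c ∈ C, c ≤ b)
    (T : X → Set X)
    (hTne : ∀ x ∈ D, (T x).Nonempty) (hTD : ∀ x ∈ D, T x ⊆ D)
    (hmono : ∀ x ∈ D, ∀ y ∈ D, x ≤ y → ∀ z ∈ T x, ∃ w ∈ T y, z ≤ w)
    (huniv : ∀ x ∈ D, ∀ C : Set X, C ⊆ D → C.Nonempty → IsChain (· ≤ ·) C →
      (∀ c ∈ C, ∃ a ∈ T x, c ≤ a) → ∃ a ∈ T x, ∀ c ∈ C, c ≤ a)
    (x₀ x₁ : X) (hx₀ : x₀ ∈ D) (hx₁ : x₁ ∈ T x₀) (h₀₁ : x₀ ≤ x₁) :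
    ({x ∈ D | x ∈ T x}).Nonempty ∧
    (∀ C : Set X, C ⊆ {x ∈ D | x ∈ T x} → C.Nonempty → IsChain (· ≤ ·) C →
      ∃ b ∈ {x ∈ D | x ∈ T x}, ∀ c ∈ C, c ≤ b) ∧
    ({x ∈ D | x ∈ T x ∧ x₀ ≤ x}).Nonempty ∧
    (∀ C : Set X, C ⊆ {x ∈ D | x ∈ T x ∧ x₀ ≤ x} → C.Nonempty → IsChain (· ≤ ·) C →
      ∃ b ∈ {x ∈ D | x ∈ T x ∧ x₀ ≤ x}, ∀ c ∈ C, c ≤ b) := by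
  have hsub : ∀ x y : X, x ≤ y ↔ 0 ≤ y - x := by
    intro x y
    constructor
    · intro h
      have := hadd x y (-x) h
      simpa [sub_eq_add_neg, add_comm] using this
    · intro h
      have := hadd 0 (y - x) x h
      simpa using this
  -- the fixed point above x₀
  obtain ⟨m₀, hm₀D, hm₀T, hm₀⟩ :=
    aux_zornCore hcone hsub hreg D hclosed hind T hTD hmono huniv x₀ hx₀ ⟨x₁, hx₁, h₀₁⟩
  -- inductivity of the fixed point set
  have hFbound : ∀ C : Set X, C ⊆ {x ∈ D | x ∈ T x} → C.Nonempty → IsChain (· ≤ ·) C →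
      ∃ b ∈ {x ∈ D | x ∈ T x}, ∀ c ∈ C, c ≤ b := by
    intro C hCF hCne hCchain
    have hCD : C ⊆ D := fun c hc => (hCF hc).1
    obtain ⟨b, hbD, hbub⟩ := hind C hCD hCne hCchain
    obtain ⟨u, huC, huub, hulub⟩ := aux_chainSup hcone hsub hreg C hCne hCchain b hbub
    have huD : u ∈ D := hclosed.closure_subset_iff.mpr hCD huC
    have hbdd : ∀ c ∈ C, ∃ a ∈ T u, c ≤ a := by
      intro c hc
      obtain ⟨w, hwT, hcw⟩ := hmono c (hCD hc) u huD (huub c hc) c (hCF hc).2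
      exact ⟨w, hwT, hcw⟩
    obtain ⟨a, haT, haub⟩ := huniv u huD C hCD hCne hCchain hbdd
    have haD : a ∈ D := hTD u huD haT
    have hua : u ≤ a := hulub a haub
    obtain ⟨w, hwT, haw⟩ := hmono u huD a haD hua a haT
    obtain ⟨m, hmD, hmT, ham⟩ :=
      aux_zornCore hcone hsub hreg D hclosed hind T hTD hmono huniv a haD ⟨w, hwT, haw⟩
    exact ⟨m, ⟨hmD, hmT⟩, fun c hc => (haub c hc).trans ham⟩
  refine ⟨⟨m₀, hm₀D, hm₀T⟩, hFbound, ⟨m₀, hm₀D, hm₀T, hm₀⟩, ?_⟩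
  intro C hCF hCne hCchain
  obtain ⟨b, ⟨hbD, hbT⟩, hbub⟩ :=
    hFbound C (fun c hc => ⟨(hCF hc).1, (hCF hc).2.1⟩) hCne hCchain
  obtain ⟨c, hc⟩ := hCne
  exact ⟨b, ⟨hbD, hbT, (hCF hc).2.2.trans (hbub c hc)⟩, hbub⟩
end

section
/- Let X be a real Banach space with a partial order ≼ that is translation invariant, invariant under multiplication by nonnegative scalars, has norm-closed positive cone, and is regular (every ≼-increasing sequence with a ≼-upper bound is norm-convergent). Let D ⊆ X be a nonempty norm-closed inductive subset and let F : D → D be an ≼-increasing single-valued mapping (x ≼ y implies Fx ≼ Fy) such that x₀ ≼ Fx₀ for some x₀ ∈ D. Then the fixed point set F(F) = {x ∈ D : Fx = x} is a nonempty inductive subset of D, and F(F) ∩ {x : x₀ ≼ x} is also a nonempty inductive subset of D. -/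
open Filter Topology

section Aux
variable {X : Type*} [NormedAddCommGroup X] [NormedSpace ℝ X] [CompleteSpace X] [PartialOrder X]

lemma aux_le_iff (hadd : ∀ x y z : X, x ≤ y → x + z ≤ y + z) (a b : X) :
    a ≤ b ↔ 0 ≤ b - a := by
  constructor
  · intro h
    have := hadd a b (-a) h
    simpa [sub_eq_add_neg] using this
  · intro h
    have := hadd 0 (b - a) a h
    simpa using this

/-- limits preserve ≤ from the right -/
lemma aux_le_lim (hadd : ∀ x y z : X, x ≤ y → x + z ≤ y + z)
    (hcone : IsClosed {x : X | 0 ≤ x}) {u : ℕ → X} {l a : X}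
    (hu : Filter.Tendsto u Filter.atTop (nhds l)) (h : ∀ᶠ n in Filter.atTop, a ≤ u n) :
    a ≤ l := by
  rw [aux_le_iff hadd]
  have ht : Filter.Tendsto (fun n => u n - a) Filter.atTop (nhds (l - a)) :=
    hu.sub tendsto_const_nhds
  exact hcone.mem_of_tendsto ht (h.mono fun n hn => (aux_le_iff hadd a (u n)).1 hn)

/-- limits preserve ≤ from the left -/
lemma aux_lim_le (hadd : ∀ x y z : X, x ≤ y → x + z ≤ y + z)
    (hcone : IsClosed {x : X | 0 ≤ x}) {u : ℕ → X} {l a : X}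
    (hu : Filter.Tendsto u Filter.atTop (nhds l)) (h : ∀ᶠ n in Filter.atTop, u n ≤ a) :
    l ≤ a := by
  rw [aux_le_iff hadd]
  have ht : Filter.Tendsto (fun n => a - u n) Filter.atTop (nhds (a - l)) :=
    tendsto_const_nhds.sub hu
  exact hcone.mem_of_tendsto ht (h.mono fun n hn => (aux_le_iff hadd (u n) a).1 hn)

lemma aux_closed_Ici (hadd : ∀ x y z : X, x ≤ y → x + z ≤ y + z)
    (hcone : IsClosed {x : X | 0 ≤ x}) (a : X) : IsClosed {x : X | a ≤ x} := by
  have : {x : X | a ≤ x} = (fun x => x - a) ⁻¹' {x : X | 0 ≤ x} := by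
    ext x; simp [aux_le_iff hadd a x]
  rw [this]
  exact hcone.preimage (continuous_id.sub continuous_const)

lemma aux_closed_Iic (hadd : ∀ x y z : X, x ≤ y → x + z ≤ y + z)
    (hcone : IsClosed {x : X | 0 ≤ x}) (a : X) : IsClosed {x : X | x ≤ a} := by
  have : {x : X | x ≤ a} = (fun x => a - x) ⁻¹' {x : X | 0 ≤ x} := by
    ext x; simp [aux_le_iff hadd x a]
  rw [this]
  exact hcone.preimage (continuous_const.sub continuous_id)

/-- Every nonempty bounded-above chain has an upper bound lying in its closure. -/
lemma aux_chain_limit (hadd : ∀ x y z : X, x ≤ y → x + z ≤ y + z)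
    (hcone : IsClosed {x : X | 0 ≤ x})
    (hreg : ∀ x : ℕ → X, (∀ n, x n ≤ x (n + 1)) → (∃ b : X, ∀ n, x n ≤ b) →
      ∃ l : X, Filter.Tendsto x Filter.atTop (nhds l))
    (C : Set X) (hne : C.Nonempty) (hchain : IsChain (· ≤ ·) C)
    (b : X) (hb : ∀ c ∈ C, c ≤ b) :
    ∃ l ∈ closure C, ∀ c ∈ C, c ≤ l := by
  classical
  obtain ⟨c₀, hc₀⟩ := hne
  -- Claim A: for every ε > 0 there is a "near-maximal" element
  have claimA : ∀ ε : ℝ, 0 < ε → ∃ c ∈ C, ∀ c' ∈ C, c ≤ c' → ‖c' - c‖ ≤ ε := by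
    intro ε hε
    by_contra h
    push_neg at h
    -- choice function producing a jump of size > ε
    have hf : ∀ c : X, ∃ c', c ∈ C → (c' ∈ C ∧ c ≤ c' ∧ ε < ‖c' - c‖) := by
      intro c
      by_cases hc : c ∈ C
      · obtain ⟨c', hc'C, hcc', hgap⟩ := h c hc
        exact ⟨c', fun _ => ⟨hc'C, hcc', hgap⟩⟩
      · exact ⟨0, fun h' => absurd h' hc⟩
    choose f hfprop using hf
    set u : ℕ → X := fun n => f^[n] c₀ with hu
    have hmem : ∀ n, u n ∈ C := by
      intro n
      induction n with
      | zero => simpa [hu] using hc₀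
      | succ n ih =>
        have : u (n + 1) = f (u n) := Function.iterate_succ_apply' f n c₀
        rw [this]
        exact (hfprop (u n) ih).1
    have hstep : ∀ n, u n ≤ u (n + 1) ∧ ε < ‖u (n + 1) - u n‖ := by
      intro n
      have hs : u (n + 1) = f (u n) := Function.iterate_succ_apply' f n c₀
      rw [hs]
      exact ⟨(hfprop (u n) (hmem n)).2.1, (hfprop (u n) (hmem n)).2.2⟩
    obtain ⟨l, hl⟩ := hreg u (fun n => (hstep n).1) ⟨b, fun n => hb _ (hmem n)⟩
    have h2 : Filter.Tendsto (fun n => u (n + 1) - u n) Filter.atTop (nhds 0) := by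
      have := ((hl.comp (Filter.tendsto_add_atTop_nat 1)).sub hl)
      simpa using this
    have h3 : Filter.Tendsto (fun n => ‖u (n + 1) - u n‖) Filter.atTop (nhds 0) := by
      simpa using h2.norm
    have := h3.eventually (eventually_lt_nhds hε)
    obtain ⟨n, hn⟩ := this.exists
    exact absurd hn (not_lt.2 (le_of_lt (hstep n).2))
  -- pick near-maximal elements c n with tolerance 1/(n+1)
  have hcn : ∀ n : ℕ, ∃ c ∈ C, ∀ c' ∈ C, c ≤ c' → ‖c' - c‖ ≤ 1 / (n + 1 : ℝ) :=
    fun n => claimA _ (by positivity)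
  choose cs hcsC hcs using hcn
  -- build an increasing sequence dominating cs
  set e : ℕ → X := fun n => Nat.rec (cs 0) (fun n en => if en ≤ cs (n + 1) then cs (n + 1) else en) n with he
  have he0 : e 0 = cs 0 := rfl
  have heS : ∀ n, e (n + 1) = if e n ≤ cs (n + 1) then cs (n + 1) else e n := fun n => rfl
  have heC : ∀ n, e n ∈ C := by
    intro n
    induction n with
    | zero => exact hcsC 0
    | succ n ih =>
      rw [heS]
      split
      · exact hcsC (n + 1)
      · exact ih
  have hemono : ∀ n, e n ≤ e (n + 1) := by
    intro n
    rw [heS]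
    split
    · assumption
    · exact le_rfl
  have hemono' : Monotone e := monotone_nat_of_le_succ hemono
  have hecs : ∀ n, cs n ≤ e n := by
    intro n
    cases n with
    | zero => exact le_of_eq he0.symm
    | succ n =>
      rw [heS]
      split
      · exact le_rfl
      · rename_i hne'
        rcases eq_or_ne (e n) (cs (n + 1)) with heq | hne''
        · exact le_of_eq heq.symm
        · rcases hchain (hcsC (n + 1)) (heC n) (Ne.symm hne'') with h | h
          · exact h
          · exact absurd h hne'
  obtain ⟨l, hl⟩ := hreg e hemono ⟨b, fun n => hb _ (heC n)⟩
  refine ⟨l, ?_, ?_⟩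
  · exact mem_closure_of_tendsto hl (Filter.Eventually.of_forall heC)
  · intro c hc
    by_cases hexists : ∃ n, c ≤ e n
    · obtain ⟨n, hn⟩ := hexists
      refine aux_le_lim hadd hcone hl ?_
      filter_upwards [Filter.eventually_ge_atTop n] with m hm
      exact hn.trans (hemono' hm)
    · push_neg at hexists
      -- then e n ≤ c for all n, and e n → c
      have hle : ∀ n, e n ≤ c := by
        intro n
        rcases eq_or_ne (e n) c with heq | hne'
        · exact le_of_eq heq
        · rcases hchain (heC n) hc hne' with h | h
          · exact h
          · exact absurd h (hexists n)
      have hclose : ∀ n : ℕ, ‖c - e n‖ ≤ 2 / (n + 1 : ℝ) := by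
        intro n
        have h1 : ‖c - cs n‖ ≤ 1 / (n + 1 : ℝ) :=
          hcs n c hc ((hecs n).trans (hle n))
        have h2 : ‖e n - cs n‖ ≤ 1 / (n + 1 : ℝ) :=
          hcs n (e n) (heC n) (hecs n)
        calc ‖c - e n‖ = ‖(c - cs n) - (e n - cs n)‖ := by rw [sub_sub_sub_cancel_right]
          _ ≤ ‖c - cs n‖ + ‖e n - cs n‖ := norm_sub_le _ _
          _ ≤ 1 / (n + 1 : ℝ) + 1 / (n + 1 : ℝ) := add_le_add h1 h2
          _ = 2 / (n + 1 : ℝ) := by ring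
      have htend : Filter.Tendsto e Filter.atTop (nhds c) := by
        rw [tendsto_iff_norm_sub_tendsto_zero]
        refine squeeze_zero (fun n => norm_nonneg _) (fun n => by simpa [norm_sub_rev] using hclose n) ?_
        have h2 := tendsto_one_div_add_atTop_nhds_zero_nat.const_mul (2:ℝ)
        simpa only [mul_one_div, mul_zero] using h2
      have : c = l := tendsto_nhds_unique htend hl
      exact this.le

/-- Core fixed point lemma: on a closed inductive set `D` with monotone `F : D → D` and
`x₀ ≤ F x₀`, there is a fixed point above `x₀`. -/
lemma aux_core (hadd : ∀ x y z : X, x ≤ y → x + z ≤ y + z)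
    (hcone : IsClosed {x : X | 0 ≤ x})
    (hreg : ∀ x : ℕ → X, (∀ n, x n ≤ x (n + 1)) → (∃ b : X, ∀ n, x n ≤ b) →
      ∃ l : X, Filter.Tendsto x Filter.atTop (nhds l))
    (D : Set X) (hclosed : IsClosed D)
    (hind : ∀ C : Set X, C ⊆ D → C.Nonempty → IsChain (· ≤ ·) C →
      ∃ b ∈ D, ∀ c ∈ C, c ≤ b)
    (F : X → X) (hFD : ∀ x ∈ D, F x ∈ D)
    (hmono : ∀ x ∈ D, ∀ y ∈ D, x ≤ y → F x ≤ F y)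
    (x₀ : X) (hx₀ : x₀ ∈ D) (h₀ : x₀ ≤ F x₀) :
    ∃ m ∈ D, F m = m ∧ x₀ ≤ m := by
  set A : Set X := {x | x ∈ D ∧ x ≤ F x ∧ x₀ ≤ x} with hA
  have hAx₀ : x₀ ∈ A := ⟨hx₀, h₀, le_rfl⟩
  have hub : ∀ c ⊆ A, IsChain (· ≤ ·) c → ∀ y ∈ c, ∃ ub ∈ A, ∀ z ∈ c, z ≤ ub := by
    intro C hCA hchain y hy
    have hCD : C ⊆ D := fun z hz => (hCA hz).1
    obtain ⟨b, hbD, hb⟩ := hind C hCD ⟨y, hy⟩ hchain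
    obtain ⟨l, hlcl, hlub⟩ := aux_chain_limit hadd hcone hreg C ⟨y, hy⟩ hchain b hb
    have hlD : l ∈ D := (hclosed.closure_subset_iff.2 hCD) hlcl
    have hlF : l ≤ F l := by
      have hsub : C ⊆ {x : X | x ≤ F l} := by
        intro c hc
        exact ((hCA hc).2.1).trans (hmono c (hCD hc) l hlD (hlub c hc))
      exact ((aux_closed_Iic hadd hcone (F l)).closure_subset_iff.2 hsub) hlcl
    have hlx₀ : x₀ ≤ l := (hCA hy).2.2.trans (hlub y hy)
    exact ⟨l, ⟨hlD, hlF, hlx₀⟩, hlub⟩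
  obtain ⟨m, hx₀m, hmax⟩ := zorn_le_nonempty₀ A hub x₀ hAx₀
  have hmA : m ∈ A := hmax.1
  have hFmA : F m ∈ A :=
    ⟨hFD m hmA.1, hmono m hmA.1 (F m) (hFD m hmA.1) hmA.2.1, hmA.2.2.trans hmA.2.1⟩
  have : F m ≤ m := hmax.2 hFmA hmA.2.1
  exact ⟨m, hmA.1, le_antisymm this hmA.2.1, hmA.2.2⟩

/-- Key lemma: a chain of fixed points in `D` has an upper bound that is a fixed point in `D`. -/
lemma aux_key (hadd : ∀ x y z : X, x ≤ y → x + z ≤ y + z)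
    (hcone : IsClosed {x : X | 0 ≤ x})
    (hreg : ∀ x : ℕ → X, (∀ n, x n ≤ x (n + 1)) → (∃ b : X, ∀ n, x n ≤ b) →
      ∃ l : X, Filter.Tendsto x Filter.atTop (nhds l))
    (D : Set X) (hclosed : IsClosed D)
    (hind : ∀ C : Set X, C ⊆ D → C.Nonempty → IsChain (· ≤ ·) C →
      ∃ b ∈ D, ∀ c ∈ C, c ≤ b)
    (F : X → X) (hFD : ∀ x ∈ D, F x ∈ D)
    (hmono : ∀ x ∈ D, ∀ y ∈ D, x ≤ y → F x ≤ F y)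
    (C : Set X) (hCD : C ⊆ D) (hfix : ∀ c ∈ C, F c = c)
    (hne : C.Nonempty) (hchain : IsChain (· ≤ ·) C) :
    ∃ m ∈ D, F m = m ∧ ∀ c ∈ C, c ≤ m := by
  obtain ⟨c₁, hc₁⟩ := id hne
  obtain ⟨b, hbD, hb⟩ := hind C hCD hne hchain
  obtain ⟨l, hlcl, hlub⟩ := aux_chain_limit hadd hcone hreg C hne hchain b hb
  have hlD : l ∈ D := (hclosed.closure_subset_iff.2 hCD) hlcl
  have hlF : l ≤ F l := by
    have hsub : C ⊆ {x : X | x ≤ F l} := by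
      intro c hc
      have := hmono c (hCD hc) l hlD (hlub c hc)
      rw [hfix c hc] at this
      exact this
    exact ((aux_closed_Iic hadd hcone (F l)).closure_subset_iff.2 hsub) hlcl
  -- the auxiliary closed inductive set of upper bounds of `C` in `D`
  set D' : Set X := {x | x ∈ D ∧ ∀ c ∈ C, c ≤ x} with hD'
  have hclosed' : IsClosed D' := by
    have : D' = D ∩ ⋂ c ∈ C, {x : X | c ≤ x} := by
      ext x
      simp [hD', Set.mem_iInter]
    rw [this]
    exact hclosed.inter (isClosed_biInter fun c _ => aux_closed_Ici hadd hcone c)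
  have hD'D : D' ⊆ D := fun x hx => hx.1
  have hind' : ∀ C' : Set X, C' ⊆ D' → C'.Nonempty → IsChain (· ≤ ·) C' →
      ∃ b' ∈ D', ∀ c ∈ C', c ≤ b' := by
    intro C' hC'D' hne' hchain'
    have hUchain : IsChain (· ≤ ·) (C ∪ C') := by
      intro a ha b' hb' hab
      rcases ha with ha | ha <;> rcases hb' with hb' | hb'
      · exact hchain ha hb' hab
      · exact Or.inl ((hC'D' hb').2 a ha)
      · exact Or.inr ((hC'D' ha).2 b' hb')
      · exact hchain' ha hb' hab
    obtain ⟨b', hb'D, hb'⟩ := hind (C ∪ C')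
      (Set.union_subset hCD (hC'D'.trans hD'D)) ⟨c₁, Or.inl hc₁⟩ hUchain
    exact ⟨b', ⟨hb'D, fun c hc => hb' c (Or.inl hc)⟩, fun c hc => hb' c (Or.inr hc)⟩
  have hFD' : ∀ x ∈ D', F x ∈ D' := by
    intro x hx
    refine ⟨hFD x hx.1, fun c hc => ?_⟩
    have := hmono c (hCD hc) x hx.1 (hx.2 c hc)
    rw [hfix c hc] at this
    exact this
  have hmono' : ∀ x ∈ D', ∀ y ∈ D', x ≤ y → F x ≤ F y :=
    fun x hx y hy h => hmono x hx.1 y hy.1 h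
  have hlD' : l ∈ D' := ⟨hlD, hlub⟩
  obtain ⟨m, hmD', hmfix, hlm⟩ :=
    aux_core hadd hcone hreg D' hclosed' hind' F hFD' hmono' l hlD' hlF
  exact ⟨m, hmD'.1, hmfix, hmD'.2⟩

end Aux

/-- Fixed point theorem for increasing single-valued maps on a closed inductive subset of a
regular partially ordered Banach space: `F(F)` and `F(F) ∩ [x₀)` are nonempty inductive. -/
theorem fixedPoints_nonempty_inductive_singleValued {X : Type*} [NormedAddCommGroup X]
    [NormedSpace ℝ X] [CompleteSpace X] [PartialOrder X]
    (hadd : ∀ x y z : X, x ≤ y → x + z ≤ y + z)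
    (hsmul : ∀ α : ℝ, 0 ≤ α → ∀ x y : X, x ≤ y → α • x ≤ α • y)
    (hcone : IsClosed {x : X | 0 ≤ x})
    (hreg : ∀ x : ℕ → X, (∀ n, x n ≤ x (n + 1)) → (∃ b : X, ∀ n, x n ≤ b) →
      ∃ l : X, Filter.Tendsto x Filter.atTop (nhds l))
    (D : Set X) (hD : D.Nonempty) (hclosed : IsClosed D)
    (hind : ∀ C : Set X, C ⊆ D → C.Nonempty → IsChain (· ≤ ·) C →
      ∃ b ∈ D, ∀ c ∈ C, c ≤ b)
    (F : X → X) (hFD : ∀ x ∈ D, F x ∈ D)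
    (hmono : ∀ x ∈ D, ∀ y ∈ D, x ≤ y → F x ≤ F y)
    (x₀ : X) (hx₀ : x₀ ∈ D) (h₀ : x₀ ≤ F x₀) :
    ({x ∈ D | F x = x}).Nonempty ∧
    (∀ C : Set X, C ⊆ {x ∈ D | F x = x} → C.Nonempty → IsChain (· ≤ ·) C →
      ∃ b ∈ {x ∈ D | F x = x}, ∀ c ∈ C, c ≤ b) ∧
    ({x ∈ D | F x = x ∧ x₀ ≤ x}).Nonempty ∧
    (∀ C : Set X, C ⊆ {x ∈ D | F x = x ∧ x₀ ≤ x} → C.Nonempty → IsChain (· ≤ ·) C →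
      ∃ b ∈ {x ∈ D | F x = x ∧ x₀ ≤ x}, ∀ c ∈ C, c ≤ b) := by
  obtain ⟨m₀, hm₀D, hm₀fix, hm₀ge⟩ :=
    aux_core hadd hcone hreg D hclosed hind F hFD hmono x₀ hx₀ h₀
  -- the restricted domain above x₀
  set Dx : Set X := {x | x ∈ D ∧ x₀ ≤ x} with hDx
  have hDxD : Dx ⊆ D := fun x hx => hx.1
  have hclosedx : IsClosed Dx := by
    have : Dx = D ∩ {x : X | x₀ ≤ x} := rfl
    rw [this]
    exact hclosed.inter (aux_closed_Ici hadd hcone x₀)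
  have hindx : ∀ C : Set X, C ⊆ Dx → C.Nonempty → IsChain (· ≤ ·) C →
      ∃ b ∈ Dx, ∀ c ∈ C, c ≤ b := by
    intro C hCDx hne hchain
    obtain ⟨c₁, hc₁⟩ := id hne
    obtain ⟨b, hbD, hb⟩ := hind C (hCDx.trans hDxD) hne hchain
    exact ⟨b, ⟨hbD, (hCDx hc₁).2.trans (hb c₁ hc₁)⟩, hb⟩
  have hFDx : ∀ x ∈ Dx, F x ∈ Dx := by
    intro x hx
    exact ⟨hFD x hx.1, h₀.trans (hmono x₀ hx₀ x hx.1 hx.2)⟩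
  have hmonox : ∀ x ∈ Dx, ∀ y ∈ Dx, x ≤ y → F x ≤ F y :=
    fun x hx y hy h => hmono x hx.1 y hy.1 h
  refine ⟨⟨m₀, hm₀D, hm₀fix⟩, ?_, ⟨m₀, hm₀D, hm₀fix, hm₀ge⟩, ?_⟩
  · intro C hC hne hchain
    obtain ⟨m, hmD, hmfix, hmub⟩ :=
      aux_key hadd hcone hreg D hclosed hind F hFD hmono C
        (fun c hc => (hC hc).1) (fun c hc => (hC hc).2) hne hchain
    exact ⟨m, ⟨hmD, hmfix⟩, hmub⟩
  · intro C hC hne hchain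
    obtain ⟨m, hmDx, hmfix, hmub⟩ :=
      aux_key hadd hcone hreg Dx hclosedx hindx F hFDx hmonox C
        (fun c hc => ⟨(hC hc).1, (hC hc).2.2⟩) (fun c hc => (hC hc).2.1) hne hchain
    exact ⟨m, ⟨hmDx.1, hmfix, hmDx.2⟩, hmub⟩
end
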